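/- arXiv:1306.5851 — 6 statements merged into one kernel-verified Lean document; each statement's English description precedes it below -/
import Mathlib

section
/- Let N ≥ 1 be an integer, let c₁, …, c_N be positive real numbers, and let G be an N×N complex matrix all of whose diagonal entries G_{kk} are nonzero. Let D be the diagonal N×N matrix with diagonal entries D_{kk} = c_k·G_{kk}. If (μ_p)_{p∈ℕ} is an injective sequence of complex numbers and (x_p)_{p∈ℕ} is a sequence of vectors in ℂ^N such that (μ_p·G + D)·x_p = 0 for every p ∈ ℕ, then the set {p ∈ ℕ : x_p ≠ 0} has at most N elements. -/
open Polynomial Matrix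

/-- With `G` an N×N complex matrix with nonzero diagonal entries, `c k > 0`,
and `D` the diagonal matrix with entries `c k * G k k`, if `(μ p • G + D) x p = 0` for an
injective sequence `μ` of complex numbers, then `x p ≠ 0` for at most `N` indices `p`. -/
theorem stmt_1 {N : ℕ} (hN : 1 ≤ N) (c : Fin N → ℝ) (hc : ∀ k, 0 < c k)
    (G : Matrix (Fin N) (Fin N) ℂ) (hG : ∀ k, G k k ≠ 0)
    (D : Matrix (Fin N) (Fin N) ℂ)
    (hD : D = Matrix.diagonal (fun k => (c k : ℂ) * G k k))
    (μ : ℕ → ℂ) (hμ : Function.Injective μ)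
    (x : ℕ → Fin N → ℂ)
    (hx : ∀ p : ℕ, (μ p • G + D).mulVec (x p) = 0) :
    {p : ℕ | x p ≠ 0}.encard ≤ N := by
  set P : Polynomial ℂ :=
    Matrix.det ((X : ℂ[X]) • G.map C + D.map C : Matrix (Fin N) (Fin N) ℂ[X]) with hP
  have heval : ∀ z : ℂ, P.eval z = (z • G + D).det := by
    intro z
    rw [hP]
    rw [show eval z ((X : ℂ[X]) • G.map C + D.map C : Matrix (Fin N) (Fin N) ℂ[X]).det
        = (evalRingHom z) ((X : ℂ[X]) • G.map C + D.map C : Matrix (Fin N) (Fin N) ℂ[X]).det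
        from rfl, RingHom.map_det]
    congr 1
    ext i j
    simp only [Matrix.map_apply, Matrix.smul_apply, Matrix.add_apply, RingHom.mapMatrix_apply,
      smul_eq_mul, coe_evalRingHom, eval_add, eval_mul, eval_X, eval_C, eval_smul]
  -- P is nonzero since P(0) = det D ≠ 0
  have hDdet : D.det ≠ 0 := by
    rw [hD, Matrix.det_diagonal]
    refine Finset.prod_ne_zero_iff.mpr fun k _ => mul_ne_zero ?_ (hG k)
    exact_mod_cast (hc k).ne'
  have hP0 : P ≠ 0 := by
    intro h
    apply hDdet
    have := heval 0
    rw [h] at this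
    simpa using this.symm
  -- each p with x p ≠ 0 gives a root μ p of P
  have hroot : ∀ p ∈ {p : ℕ | x p ≠ 0}, P.IsRoot (μ p) := by
    intro p hp
    have : (μ p • G + D).det = 0 :=
      (Matrix.exists_mulVec_eq_zero_iff).mp ⟨x p, hp, hx p⟩
    rw [Polynomial.IsRoot, heval]
    exact this
  -- the set injects into the roots of P
  have hsub : μ '' {p : ℕ | x p ≠ 0} ⊆ ↑P.roots.toFinset := by
    rintro z ⟨p, hp, rfl⟩
    simp only [Multiset.mem_toFinset, Finset.coe_sort_coe, Finset.mem_coe]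
    exact (Polynomial.mem_roots hP0).mpr (hroot p hp)
  calc {p : ℕ | x p ≠ 0}.encard = (μ '' {p : ℕ | x p ≠ 0}).encard :=
        (Set.InjOn.encard_image (hμ.injOn)).symm
    _ ≤ (↑P.roots.toFinset : Set ℂ).encard := Set.encard_mono hsub
    _ = P.roots.toFinset.card := by
        rw [Set.encard_coe_eq_coe_finsetCard]
    _ ≤ (P.roots.card : ℕ∞) := by exact_mod_cast P.roots.toFinset_card_le
    _ ≤ (P.natDegree : ℕ∞) := by exact_mod_cast P.card_roots' 
    _ ≤ N := by
        exact_mod_cast (Polynomial.natDegree_det_X_add_C_le G D).trans_eq (by simp)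
end

section
/- Let N ≥ 1 be an integer, c ∈ ℝ, and let (λ_k)_{k≥1} be a strictly increasing sequence of real numbers such that λ_k = k²π² + c + r_k with ∑_{k≥1} r_k² < ∞. Assume that λ_k − λ_j ≠ λ_p − λ_n whenever j, n ∈ {1,…,N}, k ≥ j+1, p ≥ n+1 and {j,k} ≠ {p,n}. Let Ω := {λ_k − λ_j : 1 ≤ j ≤ N, k ≥ j+1} ∪ {0}. Then: (i) there exists γ > 0 such that |a − b| ≥ γ for all distinct a, b ∈ Ω; (ii) Ω has zero upper density: for every ε > 0 there exists R > 0 such that for all r ≥ R and all x ∈ ℝ, the set Ω ∩ [x, x+r] has at most ε·r elements. -/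
private lemma sqrt_add_le' (u v : ℝ) (hu : 0 ≤ u) (hv : 0 ≤ v) :
    Real.sqrt (u + v) ≤ Real.sqrt u + Real.sqrt v := by
  rw [Real.sqrt_le_iff]
  constructor
  · positivity
  · nlinarith [Real.sq_sqrt hu, Real.sq_sqrt hv, Real.sqrt_nonneg u, Real.sqrt_nonneg v]

set_option maxHeartbeats 1000000 in
/-- Under Condition (C₄) and the classical eigenvalue asymptotics
`λ_k = k²π² + c + r_k` with `∑ r_k² < ∞`, the frequency set
`Ω = {λ_k − λ_j : 1 ≤ j ≤ N, k ≥ j+1} ∪ {0}` has a uniform gap and zero upper density. -/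
theorem stmt_3 (N : ℕ) (hN : 1 ≤ N) (c : ℝ) (lam : ℕ → ℝ)
    (hmono : ∀ j k : ℕ, 1 ≤ j → j < k → lam j < lam k)
    (hasym : Summable fun k : ℕ => (lam k - (k : ℝ) ^ 2 * Real.pi ^ 2 - c) ^ 2)
    (hC4 : ∀ j n k p : ℕ, 1 ≤ j → j ≤ N → 1 ≤ n → n ≤ N → j + 1 ≤ k → n + 1 ≤ p →
      ({j, k} : Finset ℕ) ≠ ({n, p} : Finset ℕ) → lam k - lam j ≠ lam p - lam n) :
    let Ω : Set ℝ :=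
      {x | ∃ j k : ℕ, 1 ≤ j ∧ j ≤ N ∧ j + 1 ≤ k ∧ x = lam k - lam j} ∪ {0}
    (∃ γ : ℝ, 0 < γ ∧ ∀ a ∈ Ω, ∀ b ∈ Ω, a ≠ b → γ ≤ |a - b|) ∧
    (∀ ε : ℝ, 0 < ε → ∃ R : ℝ, 0 < R ∧ ∀ r : ℝ, R ≤ r → ∀ x : ℝ,
      (Ω ∩ Set.Icc x (x + r)).Finite ∧
      ((Ω ∩ Set.Icc x (x + r)).ncard : ℝ) ≤ ε * r) := by
  intro Ω
  have hΩdef : Ω = ({x | ∃ j k : ℕ, 1 ≤ j ∧ j ≤ N ∧ j + 1 ≤ k ∧ x = lam k - lam j} ∪ {0}) := rfl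
  have hpi : (0:ℝ) < Real.pi := Real.pi_pos
  have hpi2 : (0:ℝ) < Real.pi ^ 2 := by positivity
  -- a uniform bound on the remainders
  obtain ⟨B, hB1, hB⟩ : ∃ B : ℝ, 1 ≤ B ∧
      ∀ k : ℕ, |lam k - (k : ℝ) ^ 2 * Real.pi ^ 2 - c| ≤ B := by
    have h0 := hasym.tendsto_atTop_zero
    obtain ⟨M, hM⟩ := h0.bddAbove_range
    refine ⟨max 1 (Real.sqrt M), le_max_left _ _, fun k => ?_⟩
    have hk : (lam k - (k : ℝ) ^ 2 * Real.pi ^ 2 - c) ^ 2 ≤ M := hM (Set.mem_range_self k)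
    calc |lam k - (k : ℝ) ^ 2 * Real.pi ^ 2 - c|
        = Real.sqrt ((lam k - (k : ℝ) ^ 2 * Real.pi ^ 2 - c) ^ 2) :=
          (Real.sqrt_sq_eq_abs _).symm
      _ ≤ Real.sqrt M := Real.sqrt_le_sqrt hk
      _ ≤ max 1 (Real.sqrt M) := le_max_right _ _
  have hlow : ∀ k : ℕ, (k : ℝ) ^ 2 * Real.pi ^ 2 + c - B ≤ lam k := by
    intro k; have := abs_le.1 (hB k); linarith [this.1]
  have hhigh : ∀ k : ℕ, lam k ≤ (k : ℝ) ^ 2 * Real.pi ^ 2 + c + B := by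
    intro k; have := abs_le.1 (hB k); linarith [this.2]
  have hmono' : ∀ j k : ℕ, 1 ≤ j → j ≤ k → lam j ≤ lam k := by
    intro j k h1 h2
    rcases eq_or_lt_of_le h2 with h | h
    · subst h; exact le_rfl
    · exact (hmono j k h1 h).le
  have hlam1N : lam 1 ≤ lam N := hmono' 1 N le_rfl hN
  -- choose the threshold K
  obtain ⟨K0, hK0⟩ := exists_nat_gt ((2 * B + (lam N - lam 1) + 1) / Real.pi ^ 2)
  set K := K0 + N + 2 with hKdef
  have hKN : N + 2 ≤ K := by omega
  have hKNR : (N : ℝ) + 2 ≤ (K : ℝ) := by exact_mod_cast hKN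
  have hKbig : 2 * B + (lam N - lam 1) + 1 ≤ (K : ℝ) * Real.pi ^ 2 := by
    rw [div_lt_iff₀ hpi2] at hK0
    have hK0K : (K0 : ℝ) ≤ (K : ℝ) := by exact_mod_cast (by omega : K0 ≤ K)
    nlinarith
  -- far elements are large
  have hfar : ∀ n p : ℕ, 1 ≤ n → n ≤ N → K ≤ p →
      lam N - lam 1 + 1 ≤ lam p - lam n := by
    intro n p h1 h2 h3
    have hpK : (K : ℝ) ≤ (p : ℝ) := by exact_mod_cast h3
    have hnN : lam n ≤ lam N := hmono' n N h1 h2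
    have hK2 : (K : ℝ) ≤ (p : ℝ) ^ 2 - (N : ℝ) ^ 2 := by
      have hN0 : (0:ℝ) ≤ (N : ℝ) := Nat.cast_nonneg N
      nlinarith [mul_nonneg (by linarith : (0:ℝ) ≤ (K : ℝ) - N - 1)
        (by linarith : (0:ℝ) ≤ (K : ℝ) + N)]
    have hmul : (K : ℝ) * Real.pi ^ 2 ≤ ((p : ℝ) ^ 2 - (N : ℝ) ^ 2) * Real.pi ^ 2 :=
      mul_le_mul_of_nonneg_right hK2 hpi2.le
    rw [sub_mul] at hmul
    have h4 := hlow p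
    have h5 := hhigh N
    linarith
  -- the finite part of Ω
  set Sfin : Finset ℝ := insert 0
    (((Finset.Icc 1 N ×ˢ Finset.Icc 1 K).filter fun q => q.1 + 1 ≤ q.2).image
      fun q => lam q.2 - lam q.1) with hSdef
  have h0mem : (0 : ℝ) ∈ Sfin := Finset.mem_insert_self _ _
  have dmem : ∀ j k : ℕ, 1 ≤ j → j ≤ N → j + 1 ≤ k → k ≤ K → lam k - lam j ∈ Sfin := by
    intro j k h1 h2 h3 h4
    refine Finset.mem_insert_of_mem (Finset.mem_image.2 ⟨(j, k), ?_, rfl⟩)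
    simp only [Finset.mem_filter, Finset.mem_product, Finset.mem_Icc]
    omega
  have dpos : ∀ j k : ℕ, 1 ≤ j → j + 1 ≤ k → 0 < lam k - lam j := by
    intro j k h1 h2
    have := hmono j k h1 (by omega)
    linarith
  have h21mem : lam 2 - lam 1 ∈ Sfin := dmem 1 2 le_rfl hN le_rfl (by omega)
  have h21ne : lam 2 - lam 1 ≠ 0 := ne_of_gt (dpos 1 2 le_rfl le_rfl)
  set D : Finset ℝ := Sfin.offDiag.image fun q => |q.1 - q.2| with hDdef
  have hoDne : Sfin.offDiag.Nonempty :=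
    ⟨(lam 2 - lam 1, 0), Finset.mem_offDiag.2 ⟨h21mem, h0mem, h21ne⟩⟩
  have hDne : D.Nonempty := hoDne.image _
  set γ0 := D.min' hDne with hγ0def
  have hγ0pos : 0 < γ0 := by
    obtain ⟨q, hq, hq2⟩ := Finset.mem_image.1 (D.min'_mem hDne)
    have := (Finset.mem_offDiag.1 hq).2.2
    rw [hγ0def, ← hq2]
    exact abs_pos.2 (sub_ne_zero.2 this)
  have hγ0le : ∀ a b : ℝ, a ∈ Sfin → b ∈ Sfin → a ≠ b → γ0 ≤ |a - b| := by
    intro a b ha hb hab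
    have hmem : ((a, b) : ℝ × ℝ) ∈ Sfin.offDiag := Finset.mem_offDiag.2 ⟨ha, hb, hab⟩
    exact D.min'_le _ (Finset.mem_image_of_mem _ hmem)
  have hmin1 : min γ0 1 ≤ (1:ℝ) := min_le_right _ _
  have hminγ : min γ0 1 ≤ γ0 := min_le_left _ _
  -- zero-vs-element gap
  have hz : ∀ n p : ℕ, 1 ≤ n → n ≤ N → n + 1 ≤ p → min γ0 1 ≤ |lam p - lam n| := by
    intro n p h1 h2 h3
    by_cases hpK : p ≤ K
    · have h4 := hγ0le (lam p - lam n) 0 (dmem n p h1 h2 h3 hpK) h0mem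
        (ne_of_gt (dpos n p h1 h3))
      rw [sub_zero] at h4
      linarith
    · push_neg at hpK
      have h4 := hfar n p h1 h2 hpK.le
      have h5 : (1:ℝ) ≤ lam p - lam n := by linarith
      calc min γ0 1 ≤ 1 := hmin1
        _ ≤ lam p - lam n := h5
        _ ≤ |lam p - lam n| := le_abs_self _
  -- element-vs-element gap, asymmetric form p < k
  have hpair : ∀ j n k p : ℕ, 1 ≤ j → j ≤ N → 1 ≤ n → n ≤ N → j + 1 ≤ k → n + 1 ≤ p →
      p < k → lam k - lam j ≠ lam p - lam n →
      min γ0 1 ≤ |(lam k - lam j) - (lam p - lam n)| := by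
    intro j n k p hj1 hjN hn1 hnN hjk hnp hpk hne
    by_cases hkK : k ≤ K
    · exact le_trans hminγ (hγ0le _ _ (dmem j k hj1 hjN hjk hkK)
        (dmem n p hn1 hnN hnp (le_trans hpk.le hkK)) hne)
    · push_neg at hkK
      have hKk : (K : ℝ) ≤ (k : ℝ) := by exact_mod_cast hkK.le
      have hpkR : (p : ℝ) + 1 ≤ (k : ℝ) := by exact_mod_cast hpk
      have hp0 : (0:ℝ) ≤ (p : ℝ) := Nat.cast_nonneg p
      have hk2 : (K : ℝ) ≤ (k : ℝ) ^ 2 - (p : ℝ) ^ 2 := by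
        nlinarith [mul_nonneg (by linarith : (0:ℝ) ≤ (k : ℝ) - p - 1)
          (by linarith : (0:ℝ) ≤ (k : ℝ) + p)]
      have hmul : (K : ℝ) * Real.pi ^ 2 ≤ ((k : ℝ) ^ 2 - (p : ℝ) ^ 2) * Real.pi ^ 2 :=
        mul_le_mul_of_nonneg_right hk2 hpi2.le
      rw [sub_mul] at hmul
      have h4 := hlow k
      have h5 := hhigh p
      have h6 : lam 1 ≤ lam n := hmono' 1 n le_rfl hn1
      have h7 : lam j ≤ lam N := hmono' j N hj1 hjN
      have h8 : (1:ℝ) ≤ (lam k - lam j) - (lam p - lam n) := by linarith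
      calc min γ0 1 ≤ 1 := hmin1
        _ ≤ (lam k - lam j) - (lam p - lam n) := h8
        _ ≤ |(lam k - lam j) - (lam p - lam n)| := le_abs_self _
  refine ⟨⟨min γ0 1, lt_min hγ0pos one_pos, ?_⟩, ?_⟩
  · -- the uniform gap
    intro a ha b hb hab
    rw [hΩdef] at ha hb
    rcases ha with ha | ha0
    · obtain ⟨j, k, hj1, hjN, hjk, rfl⟩ := ha
      rcases hb with hb | hb0
      · obtain ⟨n, p, hn1, hnN, hnp, rfl⟩ := hb
        rcases lt_trichotomy p k with h | h | h
        · exact hpair j n k p hj1 hjN hn1 hnN hjk hnp h hab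
        · subst h
          have hjn : j ≠ n := by
            rintro rfl; exact hab rfl
          have hsimp : (lam p - lam j) - (lam p - lam n) = lam n - lam j := by ring
          rw [hsimp]
          rcases lt_or_gt_of_ne hjn with hjn' | hjn'
          · exact hz j n hj1 hjN (by omega)
          · rw [abs_sub_comm]
            exact hz n j hn1 hnN (by omega)
        · rw [abs_sub_comm]
          exact hpair n j p k hn1 hnN hj1 hjN hnp hjk h (fun h' => hab h'.symm)
      · rw [Set.mem_singleton_iff] at hb0
        subst hb0
        rw [sub_zero]
        exact hz j k hj1 hjN hjk
    · rw [Set.mem_singleton_iff] at ha0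
      subst ha0
      rcases hb with hb | hb0
      · obtain ⟨n, p, hn1, hnN, hnp, rfl⟩ := hb
        rw [abs_sub_comm, sub_zero]
        exact hz n p hn1 hnN hnp
      · rw [Set.mem_singleton_iff] at hb0
        exact absurd hb0.symm hab
  · -- zero upper density
    intro ε hε
    obtain ⟨C, hCdef⟩ : ∃ C : ℝ, C = 1 + (N : ℝ) + (N : ℝ) * Real.sqrt (2 * B) / Real.pi :=
      ⟨_, rfl⟩
    have hC0 : 0 < C := by rw [hCdef]; positivity
    refine ⟨max 1 (max (2 * C / ε) ((2 * N / (ε * Real.pi)) ^ 2)),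
      lt_of_lt_of_le one_pos (le_max_left _ _), ?_⟩
    intro r hr x
    have hr1 : (1:ℝ) ≤ r := le_trans (le_max_left _ _) hr
    have hr0 : (0:ℝ) ≤ r := by linarith
    have hrC : 2 * C / ε ≤ r := le_trans (le_trans (le_max_left _ _) (le_max_right _ _)) hr
    have hrN : (2 * N / (ε * Real.pi)) ^ 2 ≤ r :=
      le_trans (le_trans (le_max_right _ _) (le_max_right _ _)) hr
    set Q : ℝ := (x + r + lam N - c + B) / Real.pi ^ 2 with hQdef
    set Kb : ℕ := ⌊Real.sqrt Q⌋₊ with hKbdef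
    set G : ℕ → Finset ℕ := fun j => (Finset.Icc 1 Kb).filter
      (fun k => j + 1 ≤ k ∧ x ≤ lam k - lam j ∧ lam k - lam j ≤ x + r) with hGdef
    set F : Finset ℝ := insert 0
      ((Finset.Icc 1 N).biUnion fun j => (G j).image fun k => lam k - lam j) with hFdef
    have hsub : Ω ∩ Set.Icc x (x + r) ⊆ ↑F := by
      rintro y ⟨hy, hyI⟩
      rw [hΩdef] at hy
      rcases hy with hy | hy0
      · obtain ⟨j, k, hj1, hjN, hjk, rfl⟩ := hy
        have hjNl : lam j ≤ lam N := hmono' j N hj1 hjN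
        have hkQ : ((k : ℝ)) ^ 2 ≤ Q := by
          have h1 := hlow k
          have h2 : lam k - lam j ≤ x + r := hyI.2
          rw [hQdef, le_div_iff₀ hpi2]
          linarith
        have hkKb : k ≤ Kb := by
          have h3 : ((k : ℝ)) ≤ Real.sqrt Q :=
            (Real.le_sqrt (Nat.cast_nonneg k) (le_trans (by positivity) hkQ)).2 hkQ
          exact Nat.le_floor h3
        refine Finset.mem_coe.2 (Finset.mem_insert_of_mem (Finset.mem_biUnion.2
          ⟨j, Finset.mem_Icc.2 ⟨hj1, hjN⟩, Finset.mem_image.2 ⟨k, ?_, rfl⟩⟩))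
        simp only [hGdef, Finset.mem_filter, Finset.mem_Icc]
        exact ⟨⟨by omega, hkKb⟩, hjk, hyI.1, hyI.2⟩
      · rw [Set.mem_singleton_iff] at hy0
        subst hy0
        exact Finset.mem_coe.2 (Finset.mem_insert_self _ _)
    refine ⟨Set.Finite.subset F.finite_toSet hsub, ?_⟩
    have hcard1 : (Ω ∩ Set.Icc x (x + r)).ncard ≤ F.card := by
      have := Set.ncard_le_ncard hsub F.finite_toSet
      simpa [Set.ncard_coe_finset] using this
    have hcard2 : F.card ≤ 1 + ∑ j ∈ Finset.Icc 1 N, (G j).card := by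
      calc F.card ≤ ((Finset.Icc 1 N).biUnion fun j => (G j).image
            fun k => lam k - lam j).card + 1 := Finset.card_insert_le _ _
        _ ≤ (∑ j ∈ Finset.Icc 1 N, ((G j).image fun k => lam k - lam j).card) + 1 := by
            exact Nat.add_le_add_right (Finset.card_biUnion_le) 1
        _ ≤ (∑ j ∈ Finset.Icc 1 N, (G j).card) + 1 := by
            exact Nat.add_le_add_right (Finset.sum_le_sum fun j _ => Finset.card_image_le) 1
        _ = 1 + ∑ j ∈ Finset.Icc 1 N, (G j).card := by ring
    have hper : ∀ j ∈ Finset.Icc 1 N, ((G j).card : ℝ) ≤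
        (Real.sqrt r + Real.sqrt (2 * B)) / Real.pi + 1 := by
      intro j _
      rcases (G j).eq_empty_or_nonempty with he | hne
      · rw [he]
        simp only [Finset.card_empty, Nat.cast_zero]
        positivity
      · set a := (G j).min' hne with hadef
        set b := (G j).max' hne with hbdef
        have ham := (G j).min'_mem hne
        have hbm := (G j).max'_mem hne
        have hab : a ≤ b := Finset.min'_le _ _ hbm
        simp only [hGdef, Finset.mem_filter, Finset.mem_Icc] at ham hbm
        have hcardG : (G j).card ≤ (Finset.Icc a b).card := by
          apply Finset.card_le_card
          intro k hk
          exact Finset.mem_Icc.2 ⟨Finset.min'_le _ _ hk, Finset.le_max' _ _ hk⟩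
        have hIccc : (Finset.Icc a b).card = b + 1 - a := Nat.card_Icc a b
        have hcast : ((G j).card : ℝ) ≤ (b : ℝ) - a + 1 := by
          have h1 : (G j).card ≤ b + 1 - a := hIccc ▸ hcardG
          have h2 : ((b + 1 - a : ℕ) : ℝ) = (b : ℝ) + 1 - a := by
            have : a ≤ b + 1 := by omega
            push_cast [Nat.cast_sub this]
            ring
          calc ((G j).card : ℝ) ≤ ((b + 1 - a : ℕ) : ℝ) := by exact_mod_cast h1
            _ = (b : ℝ) + 1 - a := h2
            _ = (b : ℝ) - a + 1 := by ring
        have hd : lam b - lam a ≤ r := by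
          have := ham.2.2.1
          have := hbm.2.2.2
          linarith
        have hsq : (b : ℝ) ^ 2 * Real.pi ^ 2 - (a : ℝ) ^ 2 * Real.pi ^ 2 ≤ r + 2 * B := by
          have h1 := hlow b
          have h2 := hhigh a
          linarith
        have habR : (a : ℝ) ≤ (b : ℝ) := by exact_mod_cast hab
        have ha0 : (0:ℝ) ≤ (a : ℝ) := Nat.cast_nonneg a
        have e1 : ((b : ℝ) - a) ^ 2 ≤ (b : ℝ) ^ 2 - (a : ℝ) ^ 2 := by
          nlinarith [mul_nonneg (sub_nonneg.2 habR) ha0]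
        have e2 : Real.pi ^ 2 * ((b : ℝ) - a) ^ 2 ≤
            Real.pi ^ 2 * ((b : ℝ) ^ 2 - (a : ℝ) ^ 2) :=
          mul_le_mul_of_nonneg_left e1 hpi2.le
        have hsq2 : (Real.pi * ((b : ℝ) - a)) ^ 2 ≤ r + 2 * B := by
          calc (Real.pi * ((b : ℝ) - a)) ^ 2 = Real.pi ^ 2 * ((b : ℝ) - a) ^ 2 := by ring
            _ ≤ Real.pi ^ 2 * ((b : ℝ) ^ 2 - (a : ℝ) ^ 2) := e2
            _ = (b : ℝ) ^ 2 * Real.pi ^ 2 - (a : ℝ) ^ 2 * Real.pi ^ 2 := by ring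
            _ ≤ r + 2 * B := hsq
        have hsqrt : Real.pi * ((b : ℝ) - a) ≤ Real.sqrt (r + 2 * B) := by
          have h0 : (0:ℝ) ≤ Real.pi * ((b : ℝ) - a) := by
            apply mul_nonneg hpi.le; linarith
          exact (Real.le_sqrt h0 (by linarith)).2 hsq2
        have hsplit : Real.sqrt (r + 2 * B) ≤ Real.sqrt r + Real.sqrt (2 * B) :=
          sqrt_add_le' r (2 * B) hr0 (by linarith)
        have hba : (b : ℝ) - a ≤ (Real.sqrt r + Real.sqrt (2 * B)) / Real.pi := by
          rw [le_div_iff₀ hpi]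
          calc ((b : ℝ) - a) * Real.pi = Real.pi * ((b : ℝ) - a) := by ring
            _ ≤ Real.sqrt (r + 2 * B) := hsqrt
            _ ≤ Real.sqrt r + Real.sqrt (2 * B) := hsplit
        linarith
    have hsum : ((∑ j ∈ Finset.Icc 1 N, (G j).card : ℕ) : ℝ) ≤
        (N : ℝ) * ((Real.sqrt r + Real.sqrt (2 * B)) / Real.pi + 1) := by
      push_cast
      calc (∑ j ∈ Finset.Icc 1 N, ((G j).card : ℝ))
          ≤ ∑ j ∈ Finset.Icc 1 N, ((Real.sqrt r + Real.sqrt (2 * B)) / Real.pi + 1) :=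
            Finset.sum_le_sum hper
        _ = (N : ℝ) * ((Real.sqrt r + Real.sqrt (2 * B)) / Real.pi + 1) := by
            rw [Finset.sum_const, Nat.card_Icc, Nat.add_sub_cancel, nsmul_eq_mul]
    have htotal : ((Ω ∩ Set.Icc x (x + r)).ncard : ℝ) ≤
        1 + (N : ℝ) * ((Real.sqrt r + Real.sqrt (2 * B)) / Real.pi + 1) := by
      have h1 : ((Ω ∩ Set.Icc x (x + r)).ncard : ℝ) ≤
          ((1 + ∑ j ∈ Finset.Icc 1 N, (G j).card : ℕ) : ℝ) := by
        exact_mod_cast le_trans hcard1 hcard2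
      push_cast at h1
      push_cast at hsum
      linarith
    -- final arithmetic
    have hsrr : Real.sqrt r * Real.sqrt r = r := Real.mul_self_sqrt hr0
    have hsr0 : 0 ≤ Real.sqrt r := Real.sqrt_nonneg r
    have hNpos : (0:ℝ) < (N : ℝ) := by exact_mod_cast hN
    have hsrlow : 2 * N / (ε * Real.pi) ≤ Real.sqrt r := by
      have h1 : Real.sqrt ((2 * N / (ε * Real.pi)) ^ 2) ≤ Real.sqrt r :=
        Real.sqrt_le_sqrt hrN
      rwa [Real.sqrt_sq (by positivity)] at h1
    have hCle : C ≤ ε * r / 2 := by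
      rw [div_le_iff₀ hε] at hrC
      nlinarith [hrC]
    have hNt : (N : ℝ) * Real.sqrt r / Real.pi ≤ ε * r / 2 := by
      have h5 : (2 * N / (ε * Real.pi)) * Real.sqrt r ≤ Real.sqrt r * Real.sqrt r :=
        mul_le_mul_of_nonneg_right hsrlow hsr0
      rw [hsrr] at h5
      have h6 : (N : ℝ) * Real.sqrt r / Real.pi =
          (ε / 2) * ((2 * N / (ε * Real.pi)) * Real.sqrt r) := by
        field_simp
      rw [h6]
      calc (ε / 2) * ((2 * N / (ε * Real.pi)) * Real.sqrt r) ≤ (ε / 2) * r := by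
            apply mul_le_mul_of_nonneg_left h5 (by positivity)
        _ = ε * r / 2 := by ring
    have hexpand : 1 + (N : ℝ) * ((Real.sqrt r + Real.sqrt (2 * B)) / Real.pi + 1) =
        C + (N : ℝ) * Real.sqrt r / Real.pi := by
      rw [hCdef]
      field_simp
      ring
    rw [hexpand] at htotal
    linarith
end

section
/- Let W : [0,1] → ℝ be continuous, let λ ≠ ν be real numbers, and let u, v : [0,1] → ℝ be twice continuously differentiable with u(0) = u(1) = v(0) = v(1) = 0, −u'' + W·u = λ·u and −v'' + W·v = ν·v on [0,1]. Then for every twice continuously differentiable μ : [0,1] → ℝ one has ∫₀¹ μ(x)u(x)v(x) dx = (1/(λ−ν))·∫₀¹ ( μ''(x)u(x) + 2μ'(x)u'(x) )·v(x) dx. -/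
private lemma cd2 {f : ℝ → ℝ} (hf : ContDiff ℝ 2 f) :
    Differentiable ℝ f ∧ Differentiable ℝ (deriv f) ∧ Continuous (deriv (deriv f)) := by
  have h1 : ContDiff ℝ 1 (deriv f) := by
    have := (contDiff_succ_iff_deriv.mp (show ContDiff ℝ ((1:ℕ)+1) f by exact_mod_cast hf)).2
    exact_mod_cast this.2
  have h0 : ContDiff ℝ 0 (deriv (deriv f)) := by
    have := (contDiff_succ_iff_deriv.mp (show ContDiff ℝ ((0:ℕ)+1) (deriv f) by exact_mod_cast h1)).2
    exact_mod_cast this.2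
  exact ⟨hf.differentiable two_ne_zero, h1.differentiable one_ne_zero, h0.continuous⟩

/-- For Dirichlet eigenfunctions `u`, `v` of `−∂²ₓₓ + W` on `[0,1]` with distinct
eigenvalues `λ ≠ ν`, and any C² function `μ`:
`∫₀¹ μ u v = (1/(λ−ν)) ∫₀¹ (μ'' u + 2 μ' u') v`. -/
theorem stmt_5 (W μ u v : ℝ → ℝ) (lam ν : ℝ) (hne : lam ≠ ν)
    (hW : ContinuousOn W (Set.Icc 0 1))
    (hu : ContDiff ℝ 2 u) (hv : ContDiff ℝ 2 v)
    (hu0 : u 0 = 0) (hu1 : u 1 = 0) (hv0 : v 0 = 0) (hv1 : v 1 = 0)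
    (hodeu : ∀ x ∈ Set.Icc (0 : ℝ) 1, -(deriv (deriv u)) x + W x * u x = lam * u x)
    (hodev : ∀ x ∈ Set.Icc (0 : ℝ) 1, -(deriv (deriv v)) x + W x * v x = ν * v x)
    (hμ : ContDiff ℝ 2 μ) :
    ∫ x in (0 : ℝ)..1, μ x * u x * v x
      = (1 / (lam - ν)) *
          ∫ x in (0 : ℝ)..1, (deriv (deriv μ) x * u x + 2 * deriv μ x * deriv u x) * v x := by
  obtain ⟨hμd, hμ'd, hμ''c⟩ := cd2 hμ
  obtain ⟨hud, hu'd, hu''c⟩ := cd2 hu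
  obtain ⟨hvd, hv'd, hv''c⟩ := cd2 hv
  set w : ℝ → ℝ := fun x => μ x * u x with hw
  have hwd : Differentiable ℝ w := hμd.mul hud
  have hdw : deriv w = fun x => deriv μ x * u x + μ x * deriv u x :=
    funext fun x => ((hμd x).hasDerivAt.mul (hud x).hasDerivAt).deriv
  have hdw' : ∀ x, HasDerivAt (deriv w)
      (deriv (deriv μ) x * u x + 2 * deriv μ x * deriv u x + μ x * deriv (deriv u) x) x := by
    intro x
    rw [hdw]
    have h := ((hμ'd x).hasDerivAt.mul (hud x).hasDerivAt).add
      ((hμd x).hasDerivAt.mul (hu'd x).hasDerivAt)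
    exact h.congr_deriv (by ring)
  set g : ℝ → ℝ := fun x => deriv w x * v x - w x * deriv v x with hg
  have hgd : ∀ x ∈ Set.uIcc (0:ℝ) 1, HasDerivAt g
      ((deriv (deriv μ) x * u x + 2 * deriv μ x * deriv u x + μ x * deriv (deriv u) x) * v x
        - μ x * u x * deriv (deriv v) x) x := by
    intro x _
    have h := ((hdw' x).mul (hvd x).hasDerivAt).sub ((hwd x).hasDerivAt.mul (hv'd x).hasDerivAt)
    refine h.congr_deriv ?_
    simp only [hw, hdw]
    ring
  have hcont : Continuous fun x =>
      (deriv (deriv μ) x * u x + 2 * deriv μ x * deriv u x + μ x * deriv (deriv u) x) * v x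
        - μ x * u x * deriv (deriv v) x := by
    have := hμd.continuous; have := hud.continuous; have := hvd.continuous
    have := hμ'd.continuous; have := hu'd.continuous
    fun_prop
  have hFTC := intervalIntegral.integral_eq_sub_of_hasDerivAt hgd
    (hcont.intervalIntegrable 0 1)
  have hg0 : g 1 - g 0 = 0 := by
    simp [hg, hw, hu0, hu1, hv0, hv1]
  rw [hg0] at hFTC
  -- rewrite the integrand on [0,1] using the ODEs
  have hcongr : ∫ x in (0:ℝ)..1, (deriv (deriv μ) x * u x + 2 * deriv μ x * deriv u x) * v x
      = ∫ x in (0:ℝ)..1,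
        (((deriv (deriv μ) x * u x + 2 * deriv μ x * deriv u x + μ x * deriv (deriv u) x) * v x
          - μ x * u x * deriv (deriv v) x) + (lam - ν) * (μ x * u x * v x)) := by
    apply intervalIntegral.integral_congr
    intro x hx
    rw [Set.uIcc_of_le (by norm_num : (0:ℝ) ≤ 1)] at hx
    have h1 : deriv (deriv u) x = (W x - lam) * u x := by
      have := hodeu x hx; nlinarith [this]
    have h2 : deriv (deriv v) x = (W x - ν) * v x := by
      have := hodev x hx; nlinarith [this]
    simp only [h1, h2]; ring
  have hint1 : IntervalIntegrable (fun x => μ x * u x * v x) MeasureTheory.volume 0 1 :=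
    ((hμd.continuous.mul hud.continuous).mul hvd.continuous).intervalIntegrable 0 1
  rw [hcongr, intervalIntegral.integral_add (hcont.intervalIntegrable 0 1)
      (hint1.const_mul _),
    hFTC, intervalIntegral.integral_const_mul, zero_add]
  have hlν : lam - ν ≠ 0 := sub_ne_zero.mpr hne
  field_simp
end

section
/- Let H be an infinite-dimensional separable complex Hilbert space and (e_k)_{k≥1} a Hilbert (orthonormal) basis of H. For ψ ∈ H set ‖ψ‖_{(3)} := ( ∑_{k≥1} k⁶·|⟨ψ, e_k⟩|² )^{1/2} ∈ [0,∞]. Let M, N ≥ 1 be integers and let z = (z¹,…,z^N) be an N-tuple of vectors of span{e₁,…,e_M}. Then for every ε > 0 there exists δ > 0 with the following property: for every N-tuple φ = (φ¹,…,φ^N) of vectors of H such that (a) there exists a unitary operator V on H with V z^j = φ^j for all j ∈ {1,…,N}, and (b) ‖φ^j‖_{(3)} < ∞ for each j and ∑_{j=1}^N ‖φ^j − z^j‖_{(3)} < δ, there exists a unitary operator U on H such that U z^j = φ^j for all j ∈ {1,…,N} and, for each j ∈ {1,…,M}, ‖U e_j − e_j‖_{(3)} < ε (in particular U e_j has finite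 ‖·‖_{(3)}). -/
open scoped ENNReal

/-- The weighted coefficient norm `‖ψ‖_{(3)} = (∑_{k≥1} k⁶ |⟨ψ, e_k⟩|²)^{1/2} ∈ [0,∞]`,
expressed through a Hilbert basis `b` indexed by `ℕ+`. -/
noncomputable def norm3 {H : Type*} [NormedAddCommGroup H] [InnerProductSpace ℂ H]
    (b : HilbertBasis ℕ+ ℂ H) (ψ : H) : ℝ≥0∞ :=
  (∑' k : ℕ+, ((k : ℕ) : ℝ≥0∞) ^ 6 * ((‖(b.repr ψ : ∀ _ : ℕ+, ℂ) k‖₊ : ℝ≥0∞)) ^ 2)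
    ^ ((1 : ℝ) / 2)

open MeasureTheory
set_option linter.unusedSectionVars false

lemma ofReal_norm_eq_coe_nnnorm {E : Type*} [SeminormedAddCommGroup E] (x : E) :
    ENNReal.ofReal ‖x‖ = (‖x‖₊ : ℝ≥0∞) := by rw [ofReal_norm]; rfl

section norm3lemmas

instance : MeasurableSpace ℕ+ := ⊤
instance : MeasurableSingletonClass ℕ+ := ⟨fun _ => trivial⟩

variable {H : Type*} [NormedAddCommGroup H] [InnerProductSpace ℂ H] [CompleteSpace H]
  (b : HilbertBasis ℕ+ ℂ H)

noncomputable def c3 (k : ℕ+) : ℝ≥0∞ := ((k : ℕ) : ℝ≥0∞) ^ (3 : ℕ)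

noncomputable def F3 (b : HilbertBasis ℕ+ ℂ H) (ψ : H) : ℕ+ → ℝ≥0∞ :=
  fun k => c3 k * (‖(b.repr ψ : ∀ _ : ℕ+, ℂ) k‖₊ : ℝ≥0∞)

lemma norm3_eq (ψ : H) :
    norm3 b ψ = (∑' k : ℕ+, (F3 b ψ k) ^ (2 : ℕ)) ^ ((1 : ℝ) / 2) := by
  unfold norm3 F3 c3
  congr 1
  refine tsum_congr fun k => ?_
  rw [mul_pow, ← pow_mul]

lemma norm3_eq_lintegral (ψ : H) :
    norm3 b ψ = (∫⁻ k, (F3 b ψ k) ^ (2 : ℝ) ∂Measure.count) ^ ((1 : ℝ) / 2) := by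
  rw [norm3_eq, lintegral_count]
  congr 1
  refine tsum_congr fun k => ?_
  rw [show ((2:ℝ)) = ((2:ℕ):ℝ) by norm_num, ENNReal.rpow_natCast]

lemma F3_add_le (x y : H) : ∀ k, F3 b (x + y) k ≤ F3 b x k + F3 b y k := by
  intro k
  unfold F3
  rw [← mul_add]
  refine mul_le_mul_right ?_ _
  have : (b.repr (x + y) : ∀ _ : ℕ+, ℂ) k = (b.repr x : ∀ _ : ℕ+, ℂ) k + (b.repr y : ∀ _ : ℕ+, ℂ) k := by
    rw [map_add]; simp [lp.coeFn_add]
  rw [this]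
  rw [← ENNReal.coe_add]
  exact ENNReal.coe_le_coe.mpr (nnnorm_add_le _ _)

lemma norm3_add_le (x y : H) : norm3 b (x + y) ≤ norm3 b x + norm3 b y := by
  rw [norm3_eq_lintegral, norm3_eq_lintegral, norm3_eq_lintegral]
  have hmeas : ∀ g : ℕ+ → ℝ≥0∞, AEMeasurable g (Measure.count) := by
    intro g; exact (Measurable.of_discrete).aemeasurable
  calc (∫⁻ k, (F3 b (x+y) k) ^ (2:ℝ) ∂Measure.count) ^ ((1:ℝ)/2)
      ≤ (∫⁻ k, ((F3 b x + F3 b y) k) ^ (2:ℝ) ∂Measure.count) ^ ((1:ℝ)/2) := by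
        refine ENNReal.rpow_le_rpow ?_ (by norm_num)
        refine lintegral_mono fun k => ?_
        exact ENNReal.rpow_le_rpow (F3_add_le b x y k) (by norm_num)
    _ ≤ _ := ENNReal.lintegral_Lp_add_le (hmeas _) (hmeas _) (by norm_num)

end norm3lemmas

section more
set_option linter.unusedSectionVars false
variable {H : Type*} [NormedAddCommGroup H] [InnerProductSpace ℂ H] [CompleteSpace H]
  (b : HilbertBasis ℕ+ ℂ H)

lemma norm3_zero : norm3 b (0 : H) = 0 := by
  unfold norm3
  have : ∀ k : ℕ+, ((k : ℕ) : ℝ≥0∞) ^ 6 * ((‖(b.repr (0:H) : ∀ _ : ℕ+, ℂ) k‖₊ : ℝ≥0∞)) ^ 2 = 0 := by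
    intro k; simp [map_zero]
  rw [tsum_congr this]
  simp [ENNReal.zero_rpow_of_pos]

lemma norm3_smul (a : ℂ) (ψ : H) : norm3 b (a • ψ) = (‖a‖₊ : ℝ≥0∞) * norm3 b ψ := by
  unfold norm3
  have h : ∀ k : ℕ+, ((k : ℕ) : ℝ≥0∞) ^ 6 * ((‖(b.repr (a • ψ) : ∀ _ : ℕ+, ℂ) k‖₊ : ℝ≥0∞)) ^ 2
      = (‖a‖₊ : ℝ≥0∞) ^ 2 * (((k : ℕ) : ℝ≥0∞) ^ 6 * ((‖(b.repr ψ : ∀ _ : ℕ+, ℂ) k‖₊ : ℝ≥0∞)) ^ 2) := by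
    intro k
    have : (b.repr (a • ψ) : ∀ _ : ℕ+, ℂ) k = a * (b.repr ψ : ∀ _ : ℕ+, ℂ) k := by
      rw [_root_.map_smul]; simp [lp.coeFn_smul]
    rw [this, nnnorm_mul]
    push_cast
    ring
  rw [tsum_congr h, ENNReal.tsum_mul_left,
    ENNReal.mul_rpow_of_nonneg _ _ (by norm_num : (0:ℝ) ≤ 1/2)]
  congr 1
  rw [← ENNReal.rpow_natCast (‖a‖₊ : ℝ≥0∞) 2, ← ENNReal.rpow_mul]
  norm_num

lemma norm3_neg (ψ : H) : norm3 b (-ψ) = norm3 b ψ := by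
  simpa using norm3_smul b (-1 : ℂ) ψ

lemma one_le_c3 (k : ℕ+) : (1 : ℝ≥0∞) ≤ c3 k := by
  have h1k : (1:ℝ≥0∞) ≤ ((k:ℕ):ℝ≥0∞) := Nat.one_le_cast.mpr k.2
  calc (1:ℝ≥0∞) = 1 ^ (3:ℕ) := (one_pow 3).symm
    _ ≤ c3 k := pow_le_pow_left₀ zero_le h1k 3

lemma coe_nnnorm_le_norm3 (x : H) : (‖x‖₊ : ℝ≥0∞) ≤ norm3 b x := by
  have h2 : (0:ℝ) < (2 : ℝ≥0∞).toReal := by norm_num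
  set f := b.repr x with hf
  have hsum : Summable (fun i : ℕ+ => ‖(f : ∀ _ : ℕ+, ℂ) i‖ ^ (2 : ℝ≥0∞).toReal) :=
    (lp.hasSum_norm h2 f).summable
  have hx : ‖x‖ = ‖f‖ := (b.repr.norm_map x).symm
  have key : ((‖x‖₊ : ℝ≥0∞)) ^ (2:ℕ) = ∑' i : ℕ+, ((‖(f : ∀ _ : ℕ+, ℂ) i‖₊ : ℝ≥0∞)) ^ (2:ℕ) := by
    calc ((‖x‖₊ : ℝ≥0∞)) ^ (2:ℕ) = ENNReal.ofReal (‖x‖ ^ (2:ℕ)) := by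
          rw [← ofReal_norm_eq_coe_nnnorm, ← ENNReal.ofReal_pow (norm_nonneg x)]
      _ = ENNReal.ofReal (∑' i : ℕ+, ‖(f : ∀ _ : ℕ+, ℂ) i‖ ^ (2 : ℝ≥0∞).toReal) := by
          congr 1
          rw [hx, ← lp.norm_rpow_eq_tsum h2 f]
          rw [show (2:ℝ≥0∞).toReal = ((2:ℕ):ℝ) by norm_num, Real.rpow_natCast]
      _ = ∑' i : ℕ+, ENNReal.ofReal (‖(f : ∀ _ : ℕ+, ℂ) i‖ ^ (2 : ℝ≥0∞).toReal) :=
          ENNReal.ofReal_tsum_of_nonneg (fun i => Real.rpow_nonneg (norm_nonneg _) _) hsum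
      _ = _ := by
          refine tsum_congr fun i => ?_
          rw [show (2:ℝ≥0∞).toReal = ((2:ℕ):ℝ) by norm_num, Real.rpow_natCast,
            ENNReal.ofReal_pow (norm_nonneg _), ofReal_norm_eq_coe_nnnorm]
  have hle : (∑' i : ℕ+, ((‖(f : ∀ _ : ℕ+, ℂ) i‖₊ : ℝ≥0∞)) ^ (2:ℕ))
      ≤ ∑' i : ℕ+, (F3 b x i) ^ (2:ℕ) := by
    refine ENNReal.tsum_le_tsum fun i => ?_
    refine pow_le_pow_left₀ zero_le ?_ 2
    unfold F3
    rw [hf]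
    calc (‖(f : ∀ _ : ℕ+, ℂ) i‖₊ : ℝ≥0∞) = 1 * (‖(f : ∀ _ : ℕ+, ℂ) i‖₊ : ℝ≥0∞) := (one_mul _).symm
      _ ≤ _ := mul_le_mul_left (one_le_c3 i) _
  have := ENNReal.rpow_le_rpow (le_of_eq key |>.trans hle) (by norm_num : (0:ℝ) ≤ 1/2)
  calc (‖x‖₊ : ℝ≥0∞) = (((‖x‖₊ : ℝ≥0∞)) ^ (2:ℕ)) ^ ((1:ℝ)/2) := by
        rw [← ENNReal.rpow_natCast _ 2, ← ENNReal.rpow_mul]; norm_num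
    _ ≤ (∑' i : ℕ+, (F3 b x i) ^ (2:ℕ)) ^ ((1:ℝ)/2) := this
    _ = norm3 b x := (norm3_eq b x).symm

lemma norm3_basis (k : ℕ+) : norm3 b (b k) = c3 k := by
  classical
  unfold norm3
  have hterm : ∀ i : ℕ+, ((i:ℕ):ℝ≥0∞)^6 * ((‖(b.repr (b k) : ∀ _:ℕ+, ℂ) i‖₊ : ℝ≥0∞))^2
      = if i = k then ((k:ℕ):ℝ≥0∞)^6 else 0 := by
    intro i
    rw [b.repr_self]
    by_cases h : i = k
    · subst h
      rw [lp.single_apply_self]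
      simp
    · have hz : (lp.single (E := fun _ : ℕ+ => ℂ) 2 k (1:ℂ)) i = 0 :=
        lp.single_apply_ne _ _ _ h
      rw [hz]
      simp [h]
  rw [tsum_congr hterm, tsum_ite_eq]
  unfold c3
  rw [← ENNReal.rpow_natCast _ 6, ← ENNReal.rpow_natCast _ 3, ← ENNReal.rpow_mul]
  norm_num

lemma norm3_sum_le {ι : Type*} (s : Finset ι) (f : ι → H) :
    norm3 b (∑ i ∈ s, f i) ≤ ∑ i ∈ s, norm3 b (f i) := by
  classical
  induction s using Finset.induction_on with
  | empty => simp [norm3_zero]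
  | insert _ _ hx ih =>
      rename_i a s
      rw [Finset.sum_insert hx, Finset.sum_insert hx]
      exact le_trans (norm3_add_le b _ _) (add_le_add_right ih _)

lemma norm3_lt_top_of_mem_span {s : Set H} (hs : ∀ y ∈ s, norm3 b y < ⊤) {x : H}
    (hx : x ∈ Submodule.span ℂ s) : norm3 b x < ⊤ := by
  induction hx using Submodule.span_induction with
  | mem y hy => exact hs y hy
  | zero => rw [norm3_zero]; exact ENNReal.zero_lt_top
  | add u v hu hv ihu ihv => exact lt_of_le_of_lt (norm3_add_le b u v) (ENNReal.add_lt_top.mpr ⟨ihu, ihv⟩)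
  | smul a u hu ihu =>
      rw [norm3_smul]
      exact ENNReal.mul_lt_top ENNReal.coe_lt_top ihu

end more

section unitary
open scoped InnerProductSpace
variable {H : Type*} [NormedAddCommGroup H] [InnerProductSpace ℂ H] [CompleteSpace H]

/-- Extend a unitary of a finite-dimensional subspace by the identity on its orthogonal
complement. -/
lemma exists_extension_unitary (G : Submodule ℂ H) [FiniteDimensional ℂ G] (A : G ≃ₗᵢ[ℂ] G) :
    ∃ U : H ≃ₗᵢ[ℂ] H, ∀ x (hx : x ∈ G), U x = ↑(A ⟨x, hx⟩) := by
  haveI : CompleteSpace G := FiniteDimensional.complete ℂ G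
  set P : H →L[ℂ] G := G.orthogonalProjectionOnto with hP
  have hPy : ∀ y : G, P (↑y) = y := fun y => Submodule.orthogonalProjectionOnto_mem_subspace_eq_self y
  have hQmem : ∀ x : H, x - ↑(P x) ∈ Gᗮ := fun x => G.sub_starProjection_mem_orthogonal x
  have hPQ : ∀ x : H, P (x - ↑(P x)) = 0 := fun x =>
    Submodule.orthogonalProjectionOnto_apply_of_mem_orthogonal (hQmem x)
  classical
  let f : H → H := fun x => ↑(A (P x)) + (x - ↑(P x))
  let g : H → H := fun x => ↑(A.symm (P x)) + (x - ↑(P x))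
  have hPf : ∀ x, P (f x) = A (P x) := by
    intro x
    simp only [f, map_add, hPy, hPQ, add_zero]
  have hPg : ∀ x, P (g x) = A.symm (P x) := by
    intro x
    simp only [g, map_add, hPy, hPQ, add_zero]
  have hgf : ∀ x, g (f x) = x := by
    intro x
    simp only [g, hPf]
    simp only [f, LinearIsometryEquiv.symm_apply_apply]
    abel
  have hfg : ∀ x, f (g x) = x := by
    intro x
    simp only [f, hPg]
    simp only [g, LinearIsometryEquiv.apply_symm_apply]
    abel
  let e : H ≃ₗ[ℂ] H :=
    { toFun := f
      invFun := g
      left_inv := hgf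
      right_inv := hfg
      map_add' := by
        intro x y
        simp only [f, map_add, Submodule.coe_add]
        abel
      map_smul' := by
        intro a x
        simp only [f, _root_.map_smul, Submodule.coe_smul, RingHom.id_apply, smul_sub, smul_add] }
  have hinner : ∀ x y : H, ⟪e x, e y⟫_ℂ = ⟪x, y⟫_ℂ := by
    intro x y
    have hex : e x = ↑(A (P x)) + (x - ↑(P x)) := rfl
    have hey : e y = ↑(A (P y)) + (y - ↑(P y)) := rfl
    have hx' : x = ↑(P x) + (x - ↑(P x)) := by abel
    have hy' : y = ↑(P y) + (y - ↑(P y)) := by abel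
    rw [hex, hey]
    conv_rhs => rw [hx', hy']
    rw [inner_add_left, inner_add_left, inner_add_right, inner_add_right,
      inner_add_right, inner_add_right]
    have c1 : ⟪(↑(A (P x)) : H), (y - ↑(P y))⟫_ℂ = 0 :=
      Submodule.inner_right_of_mem_orthogonal (SetLike.coe_mem _) (hQmem y)
    have c2 : ⟪(x - ↑(P x)), (↑(A (P y)) : H)⟫_ℂ = 0 :=
      Submodule.inner_left_of_mem_orthogonal (SetLike.coe_mem _) (hQmem x)
    have c3 : ⟪(↑(P x) : H), (y - ↑(P y))⟫_ℂ = 0 :=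
      Submodule.inner_right_of_mem_orthogonal (SetLike.coe_mem _) (hQmem y)
    have c4 : ⟪(x - ↑(P x)), (↑(P y) : H)⟫_ℂ = 0 :=
      Submodule.inner_left_of_mem_orthogonal (SetLike.coe_mem _) (hQmem x)
    have main : ⟪(↑(A (P x)) : H), (↑(A (P y)) : H)⟫_ℂ = ⟪(↑(P x) : H), (↑(P y) : H)⟫_ℂ := by
      rw [← Submodule.coe_inner, ← Submodule.coe_inner, A.inner_map_map]
    rw [c1, c2, c3, c4, main]
  refine ⟨e.isometryOfInner hinner, ?_⟩
  intro x hx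
  have : e x = ↑(A (P x)) + (x - ↑(P x)) := rfl
  have hPx : P x = ⟨x, hx⟩ := by
    have := hPy ⟨x, hx⟩
    simpa using this
  simp only [LinearEquiv.coe_isometryOfInner, this, hPx]
  simp

/-- A unitary of `H` mapping a given orthonormal tuple of a finite-dimensional subspace `G`
to another orthonormal tuple of `G`. -/
lemma exists_unitary_of_orthonormal (G : Submodule ℂ H) [FiniteDimensional ℂ G] {m : ℕ}
    (u v : Fin m → H) (hu : ∀ i, u i ∈ G) (hv : ∀ i, v i ∈ G)
    (hmn : m ≤ Module.finrank ℂ G)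
    (huon : Orthonormal ℂ u)
    (hvon : ∀ i j : Fin m, ⟪v i, v j⟫_ℂ = if i = j then 1 else 0) :
    ∃ U : H ≃ₗᵢ[ℂ] H, ∀ i, U (u i) = v i := by
  classical
  set n := Module.finrank ℂ G with hn
  let tu : Fin n → G := fun i => if h : (i : ℕ) < m then ⟨u ⟨i, h⟩, hu _⟩ else 0
  let tv : Fin n → G := fun i => if h : (i : ℕ) < m then ⟨v ⟨i, h⟩, hv _⟩ else 0
  set s : Set (Fin n) := {i : Fin n | (i : ℕ) < m} with hs
  have hcard : Module.finrank ℂ G = Fintype.card (Fin n) := by simp [hn]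
  have htuon : Orthonormal ℂ (s.restrict tu) := by
    rw [orthonormal_iff_ite]
    intro i j
    have hi : ((i : Fin n) : ℕ) < m := i.2
    have hj : ((j : Fin n) : ℕ) < m := j.2
    have : ⟪s.restrict tu i, s.restrict tu j⟫_ℂ = ⟪u ⟨(i : Fin n), hi⟩, u ⟨(j : Fin n), hj⟩⟫_ℂ := by
      show ⟪((tu (i : Fin n) : G) : H), ((tu (j : Fin n) : G) : H)⟫_ℂ = _
      simp only [tu, dif_pos hi, dif_pos hj]
    rw [this, orthonormal_iff_ite.mp huon]
    have hiff : ((⟨((i : Fin n) : ℕ), hi⟩ : Fin m) = ⟨((j : Fin n) : ℕ), hj⟩) ↔ i = j := by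
      constructor
      · intro h
        have hval := congrArg Fin.val h
        exact Subtype.ext (Fin.ext (by simpa using hval))
      · rintro rfl; rfl
    simp [hiff]
  have htvon : Orthonormal ℂ (s.restrict tv) := by
    rw [orthonormal_iff_ite]
    intro i j
    have hi : ((i : Fin n) : ℕ) < m := i.2
    have hj : ((j : Fin n) : ℕ) < m := j.2
    have : ⟪s.restrict tv i, s.restrict tv j⟫_ℂ = ⟪v ⟨((i : Fin n) : ℕ), hi⟩, v ⟨((j : Fin n) : ℕ), hj⟩⟫_ℂ := by
      show ⟪((tv (i : Fin n) : G) : H), ((tv (j : Fin n) : G) : H)⟫_ℂ = _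
      simp only [tv, dif_pos hi, dif_pos hj]
    rw [this, hvon]
    have hiff : ((⟨((i : Fin n) : ℕ), hi⟩ : Fin m) = ⟨((j : Fin n) : ℕ), hj⟩) ↔ i = j := by
      constructor
      · intro h
        have hval := congrArg Fin.val h
        exact Subtype.ext (Fin.ext (by simpa using hval))
      · rintro rfl; rfl
    simp [hiff]
  obtain ⟨β, hβ⟩ := htuon.exists_orthonormalBasis_extension_of_card_eq hcard
  obtain ⟨β', hβ'⟩ := htvon.exists_orthonormalBasis_extension_of_card_eq hcard
  let A : G ≃ₗᵢ[ℂ] G := β.repr.trans β'.repr.symm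
  obtain ⟨U, hU⟩ := exists_extension_unitary G A
  refine ⟨U, fun i => ?_⟩
  have hilt : (i : ℕ) < n := lt_of_lt_of_le i.2 hmn
  set i' : Fin n := ⟨(i : ℕ), hilt⟩ with hi'
  have hin : i' ∈ s := (show ((i' : Fin n) : ℕ) < m from i.2)
  have hmkeq : (⟨((i' : Fin n) : ℕ), (show ((i' : Fin n) : ℕ) < m from i.2)⟩ : Fin m) = i :=
    Fin.ext rfl
  have h1 : tu i' = ⟨u i, hu i⟩ := by
    simp only [tu, dif_pos (show ((i' : Fin n) : ℕ) < m from i.2)]; rfl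
  have h2 : tv i' = ⟨v i, hv i⟩ := by
    simp only [tv, dif_pos (show ((i' : Fin n) : ℕ) < m from i.2)]; rfl
  have hA : A (tu i') = tv i' := by
    rw [← hβ i' hin, ← hβ' i' hin]
    simp only [A, LinearIsometryEquiv.trans_apply, OrthonormalBasis.repr_self,
      OrthonormalBasis.repr_symm_single]
  calc U (u i) = ↑(A ⟨u i, hu i⟩) := hU (u i) (hu i)
    _ = ↑(A (tu i')) := by rw [h1]
    _ = ↑(tv i') := by rw [hA]
    _ = v i := by rw [h2]

end unitary
section main
open scoped InnerProductSpace
open Module Submodule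

set_option maxHeartbeats 1000000 in
/-- Lemma 4.2 of the paper.  For an N-tuple `z` of vectors of
`span{e₁,…,e_M}` and every `ε > 0` there is `δ > 0` such that any N-tuple `φ` which is
unitarily equivalent to `z`, has finite `‖·‖₍₃₎`-norms and satisfies
`∑_j ‖φ^j − z^j‖₍₃₎ < δ`, is of the form `φ = U z` for a unitary `U` with
`‖U e_j − e_j‖₍₃₎ < ε` for `j = 1, …, M`. -/
theorem stmt_7 {H : Type*} [NormedAddCommGroup H] [InnerProductSpace ℂ H] [CompleteSpace H]
    (hinf : ¬ FiniteDimensional ℂ H)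
    (b : HilbertBasis ℕ+ ℂ H) (M N : ℕ) (hM : 1 ≤ M) (hN : 1 ≤ N)
    (z : Fin N → H)
    (hz : ∀ j, z j ∈ Submodule.span ℂ ((fun k : ℕ+ => b k) '' {k : ℕ+ | (k : ℕ) ≤ M})) :
    ∀ ε : ℝ, 0 < ε → ∃ δ : ℝ, 0 < δ ∧ ∀ φ : Fin N → H,
      (∃ V : H ≃ₗᵢ[ℂ] H, ∀ j, V (z j) = φ j) →
      (∀ j, norm3 b (φ j) < ⊤) →
      (∑ j : Fin N, norm3 b (φ j - z j)) < ENNReal.ofReal δ →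
      ∃ U : H ≃ₗᵢ[ℂ] H, (∀ j, U (z j) = φ j) ∧
        ∀ k : ℕ+, (k : ℕ) ≤ M →
          norm3 b (U (b k) - b k) < ENNReal.ofReal ε ∧ norm3 b (U (b k)) < ⊤ := by
  classical
  intro ε hε
  -- Phase 0 : fixed data
  set S : Set ℕ+ := {k : ℕ+ | (k : ℕ) ≤ M} with hS
  set CM : Submodule ℂ H := Submodule.span ℂ ((fun k : ℕ+ => b k) '' S) with hCM
  -- an indexing of the first M basis vectors
  let g : Fin M → ℕ+ := fun i => ⟨i.1 + 1, Nat.succ_pos _⟩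
  have hg_mem : ∀ i : Fin M, (g i : ℕ) ≤ M := fun i => i.2
  have hginj : Function.Injective g := by
    intro i j hij
    have hco : ((g i : ℕ+) : ℕ) = ((g j : ℕ+) : ℕ) := congrArg (fun k : ℕ+ => (k : ℕ)) hij
    have : i.1 + 1 = j.1 + 1 := hco
    exact Fin.ext (by omega)
  have hrange : Set.range (fun i : Fin M => b (g i)) = (fun k : ℕ+ => b k) '' S := by
    ext x
    constructor
    · rintro ⟨i, rfl⟩
      exact ⟨g i, hg_mem i, rfl⟩
    · rintro ⟨k, hk, rfl⟩
      have hk1 : 1 ≤ (k : ℕ) := k.2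
      have hkM : (k : ℕ) ≤ M := hk
      refine ⟨⟨(k : ℕ) - 1, by omega⟩, ?_⟩
      have hgg : g ⟨(k : ℕ) - 1, by omega⟩ = k := by
        apply PNat.coe_injective
        show (k : ℕ) - 1 + 1 = (k : ℕ)
        omega
      show b (g ⟨(k : ℕ) - 1, by omega⟩) = b k
      rw [hgg]
  have hb_on : Orthonormal ℂ (fun i : Fin M => b (g i)) := b.orthonormal.comp g hginj
  have hCM_span : CM = Submodule.span ℂ (Set.range fun i : Fin M => b (g i)) := by
    rw [hCM, hrange]
  haveI hCMfd : FiniteDimensional ℂ CM := by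
    rw [hCM_span]
    exact FiniteDimensional.span_of_finite ℂ (Set.finite_range _)
  have hfrCM : finrank ℂ CM = M := by
    rw [hCM_span] at hCMfd ⊢
    rw [finrank_span_eq_card hb_on.linearIndependent]
    simp
  set E : Submodule ℂ H := Submodule.span ℂ (Set.range z) with hE
  haveI hEfd : FiniteDimensional ℂ E := FiniteDimensional.span_of_finite ℂ (Set.finite_range z)
  have hEC : E ≤ CM := by
    rw [hE, hCM]
    exact Submodule.span_le.mpr (by rintro x ⟨j, rfl⟩; exact hz j)
  set d : ℕ := finrank ℂ E with hd
  have hdM : d ≤ M := hfrCM ▸ Submodule.finrank_mono hEC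
  let eE : OrthonormalBasis (Fin d) ℂ E := stdOrthonormalBasis ℂ E
  -- an orthonormal basis of CM whose first d vectors span E
  let w0 : Fin M → CM := fun i =>
    if h : (i : ℕ) < d then ⟨(eE ⟨i.1, h⟩ : H), hEC (eE ⟨i.1, h⟩).2⟩ else 0
  have hw0_on : Orthonormal ℂ (Set.restrict {i : Fin M | (i : ℕ) < d} w0) := by
    rw [orthonormal_iff_ite]
    intro i j
    have hi : ((i : Fin M) : ℕ) < d := i.2
    have hj : ((j : Fin M) : ℕ) < d := j.2
    have hval : ⟪Set.restrict _ w0 i, Set.restrict _ w0 j⟫_ℂ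
        = ⟪eE ⟨((i : Fin M) : ℕ), hi⟩, eE ⟨((j : Fin M) : ℕ), hj⟩⟫_ℂ := by
      show ⟪((w0 (i : Fin M) : CM) : H), ((w0 (j : Fin M) : CM) : H)⟫_ℂ = _
      simp only [w0, dif_pos hi, dif_pos hj, Submodule.coe_inner]
    rw [hval, orthonormal_iff_ite.mp eE.orthonormal]
    have hiff : ((⟨((i : Fin M) : ℕ), hi⟩ : Fin d) = ⟨((j : Fin M) : ℕ), hj⟩) ↔ i = j := by
      constructor
      · intro h
        have hval2 := congrArg Fin.val h
        exact Subtype.ext (Fin.ext (by simpa using hval2))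
      · rintro rfl; rfl
    simp [hiff]
  obtain ⟨uB, huB⟩ := hw0_on.exists_orthonormalBasis_extension_of_card_eq
    (by simpa using hfrCM)
  set u : Fin M → H := fun i => ((uB i : CM) : H) with hu
  have hu_on : Orthonormal ℂ u := by
    rw [orthonormal_iff_ite]
    intro i j
    have : ⟪u i, u j⟫_ℂ = ⟪uB i, uB j⟫_ℂ := (Submodule.coe_inner _ _ _).symm
    rw [this, orthonormal_iff_ite.mp uB.orthonormal]
  have huCM : ∀ i, u i ∈ CM := fun i => (uB i).2
  have huE : ∀ (i : Fin M) (h : (i : ℕ) < d), u i = ((eE ⟨i.1, h⟩ : E) : H) := by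
    intro i h
    have h1 : uB i = w0 i := huB i h
    show ((uB i : CM) : H) = _
    rw [h1]
    simp only [w0, dif_pos h]
  have huEmem : ∀ (i : Fin M), (i : ℕ) < d → u i ∈ E := by
    intro i h
    rw [huE i h]
    exact (eE ⟨i.1, h⟩).2
  have hspanz : ∀ j, z j ∈ Submodule.span ℂ (u '' {i : Fin M | (i : ℕ) < d}) := by
    intro j
    have hzE : z j ∈ E := by rw [hE]; exact Submodule.subset_span (Set.mem_range_self j)
    have hsum := eE.sum_repr ⟨z j, hzE⟩
    have hcoe : z j = ∑ i : Fin d, eE.repr ⟨z j, hzE⟩ i • ((eE i : E) : H) := by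
      have h2 := congrArg (Subtype.val : E → H) hsum
      conv_lhs => rw [show z j = ((⟨z j, hzE⟩ : E) : H) from rfl]
      rw [← h2, AddSubmonoidClass.coe_finset_sum]
      simp [Submodule.coe_smul]
    rw [hcoe]
    refine Submodule.sum_mem _ fun i _ => Submodule.smul_mem _ _ (Submodule.subset_span ?_)
    refine ⟨⟨i.1, lt_of_lt_of_le i.2 hdM⟩, i.2, ?_⟩
    rw [huE ⟨i.1, lt_of_lt_of_le i.2 hdM⟩ i.2]
  -- norm3 facts about u
  have hgen3 : ∀ y ∈ (fun k : ℕ+ => b k) '' S, norm3 b y < ⊤ := by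
    rintro y ⟨k, _, rfl⟩
    rw [norm3_basis]
    exact ENNReal.pow_lt_top (ENNReal.natCast_lt_top _)
  have hu3 : ∀ i, norm3 b (u i) < ⊤ := fun i =>
    norm3_lt_top_of_mem_span b hgen3 (hCM ▸ huCM i)
  set B : ℝ≥0∞ := ∑ i : Fin M, norm3 b (u i) with hB
  have hBtop : B ≠ ⊤ := by
    rw [hB]
    exact (ENNReal.sum_lt_top.mpr fun i _ => hu3 i).ne
  have hBi : ∀ i, norm3 b (u i) ≤ B := by
    intro i
    rw [hB]
    exact Finset.single_le_sum (f := fun i => norm3 b (u i)) (fun i _ => zero_le)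
      (Finset.mem_univ i)
  -- coefficients for the first d vectors
  have hcoef : ∀ i : Fin M, ∃ a : Fin N → ℂ, ((i : ℕ) < d → ∑ j, a j • z j = u i) := by
    intro i
    by_cases h : (i : ℕ) < d
    · have : u i ∈ Submodule.span ℂ (Set.range z) := by rw [← hE]; exact huEmem i h
      obtain ⟨a, ha⟩ := (mem_span_range_iff_exists_fun ℂ).mp this
      exact ⟨a, fun _ => ha⟩
    · exact ⟨0, fun hc => absurd hc h⟩
  choose acoef hacoef using hcoef
  set a0 : ℝ≥0∞ := ∑ i : Fin M, ∑ j : Fin N, (‖acoef i j‖₊ : ℝ≥0∞) with ha0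
  have ha0top : a0 ≠ ⊤ := by
    rw [ha0]
    exact (ENNReal.sum_lt_top.mpr fun i _ =>
      ENNReal.sum_lt_top.mpr fun j _ => ENNReal.coe_lt_top).ne
  have ha0i : ∀ i : Fin M, (∑ j : Fin N, (‖acoef i j‖₊ : ℝ≥0∞)) ≤ a0 := by
    intro i
    rw [ha0]
    exact Finset.single_le_sum (f := fun i : Fin M => ∑ j : Fin N, ((‖acoef i j‖₊ : ℝ≥0∞)))
      (fun i _ => zero_le) (Finset.mem_univ i)
  -- the target subspace
  let Gm : (H ≃ₗᵢ[ℂ] H) → Submodule ℂ H := fun V =>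
    CM ⊔ E.map (V.toLinearEquiv : H ≃ₗ[ℂ] H).toLinearMap
  -- the Gram--Schmidt induction
  have KEY : ∀ m : ℕ, d ≤ m → (m ≤ M → ∃ c : ℝ≥0∞, 1 ≤ c ∧ c ≠ ⊤ ∧ ∃ θ : ℝ, 0 < θ ∧
      ∀ (φ : Fin N → H) (V : H ≃ₗᵢ[ℂ] H), (∀ j, V (z j) = φ j) →
        (∑ j : Fin N, norm3 b (φ j - z j)) ≤ ENNReal.ofReal θ →
        ∃ v : Fin M → H,
          (∀ i : Fin M, (i : ℕ) < d → v i = V (u i)) ∧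
          (∀ i : Fin M, (i : ℕ) < m → v i ∈ Gm V) ∧
          (∀ i j : Fin M, (i : ℕ) < m → (j : ℕ) < m →
            ⟪v i, v j⟫_ℂ = if i = j then 1 else 0) ∧
          (∀ i : Fin M, (i : ℕ) < m →
            norm3 b (v i - u i) ≤ c * ∑ j : Fin N, norm3 b (φ j - z j))) := by
    intro m hdm
    induction m, hdm using Nat.le_induction with
    | base =>
      intro _
      refine ⟨a0 + 1, le_add_self, by simp [ha0top], 1, one_pos, ?_⟩
      intro φ V hVz hη
      refine ⟨fun i => V (u i), fun i _ => rfl, ?_, ?_, ?_⟩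
      · intro i hi
        apply Submodule.mem_sup_right
        exact ⟨u i, huEmem i hi, rfl⟩
      · intro i j _ _
        rw [LinearIsometryEquiv.inner_map_map]
        exact orthonormal_iff_ite.mp hu_on i j
      · intro i hi
        have hrep : ∑ j, acoef i j • z j = u i := hacoef i hi
        have hVu : V (u i) = ∑ j, acoef i j • φ j := by
          rw [← hrep, map_sum]
          refine Finset.sum_congr rfl fun j _ => ?_
          rw [LinearIsometryEquiv.map_smul, hVz j]
        have hdiff : V (u i) - u i = ∑ j, acoef i j • (φ j - z j) := by
          rw [hVu]
          conv_lhs => rw [← hrep]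
          rw [← Finset.sum_sub_distrib]
          exact Finset.sum_congr rfl fun j _ => (smul_sub _ _ _).symm
        rw [hdiff]
        calc norm3 b (∑ j, acoef i j • (φ j - z j))
            ≤ ∑ j, norm3 b (acoef i j • (φ j - z j)) := norm3_sum_le b _ _
          _ = ∑ j, (‖acoef i j‖₊ : ℝ≥0∞) * norm3 b (φ j - z j) := by
              exact Finset.sum_congr rfl fun j _ => norm3_smul b _ _
          _ ≤ ∑ j, (‖acoef i j‖₊ : ℝ≥0∞) * (∑ j' : Fin N, norm3 b (φ j' - z j')) := by
              refine Finset.sum_le_sum fun j _ => mul_le_mul_right ?_ _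
              exact Finset.single_le_sum (f := fun j' => norm3 b (φ j' - z j'))
                (fun _ _ => zero_le) (Finset.mem_univ j)
          _ = (∑ j, (‖acoef i j‖₊ : ℝ≥0∞)) * (∑ j' : Fin N, norm3 b (φ j' - z j')) :=
              (Finset.sum_mul _ _ _).symm
          _ ≤ (a0 + 1) * (∑ j' : Fin N, norm3 b (φ j' - z j')) :=
              mul_le_mul_left ((ha0i i).trans le_self_add) _
    | succ m hdm IH =>
      intro hm1M
      have hmM : m ≤ M := Nat.le_of_succ_le hm1M
      have hmM' : m < M := hm1M
      obtain ⟨c, hc1, hcT, θ, hθ, Hv⟩ := IH hmM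
      set K : ℝ≥0∞ := (M : ℝ≥0∞) * (B + 1) * c with hK
      have hKT : K ≠ ⊤ := by
        rw [hK]
        exact ENNReal.mul_ne_top (ENNReal.mul_ne_top (ENNReal.natCast_ne_top _)
          (by simp [hBtop])) hcT
      have hK1 : (1 : ℝ≥0∞) ≤ K := by
        rw [hK]
        calc (1:ℝ≥0∞) = 1 * 1 * 1 := by ring
          _ ≤ (M : ℝ≥0∞) * (B + 1) * c := by
              refine mul_le_mul' (mul_le_mul' ?_ ?_) hc1
              · exact_mod_cast Nat.one_le_cast.mpr hM
              · exact le_add_self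
      have hK0 : K ≠ 0 := (zero_lt_one.trans_le hK1).ne'
      have hKr : 0 < K.toReal := ENNReal.toReal_pos hK0 hKT
      set θ2 : ℝ := 1 / (2 * K.toReal) with hθ2def
      have hθ2 : 0 < θ2 := by positivity
      have hKθ2 : K * ENNReal.ofReal θ2 = ENNReal.ofReal (1/2) := by
        conv_lhs => rw [← ENNReal.ofReal_toReal hKT]
        rw [← ENNReal.ofReal_mul (le_of_lt hKr)]
        congr 1
        rw [hθ2def]
        field_simp
      refine ⟨c + 2 * K * (B + 1), hc1.trans le_self_add, ?_, min θ θ2, lt_min hθ hθ2, ?_⟩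
      · refine ENNReal.add_ne_top.mpr ⟨hcT, ?_⟩
        exact ENNReal.mul_ne_top (ENNReal.mul_ne_top ENNReal.ofNat_ne_top hKT) (by simp [hBtop])
      intro φ V hVz hη
      set η : ℝ≥0∞ := ∑ j : Fin N, norm3 b (φ j - z j) with hηdef
      have hηθ : η ≤ ENNReal.ofReal θ :=
        hη.trans (ENNReal.ofReal_le_ofReal (min_le_left _ _))
      obtain ⟨v, hv1, hv2, hv3, hv4⟩ := Hv φ V hVz hηθ
      have hKη : K * η ≤ ENNReal.ofReal (1/2) := by
        calc K * η ≤ K * ENNReal.ofReal (min θ θ2) := mul_le_mul_right hη K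
          _ ≤ K * ENNReal.ofReal θ2 :=
              mul_le_mul_right (ENNReal.ofReal_le_ofReal (min_le_right _ _)) K
          _ = ENNReal.ofReal (1/2) := hKθ2
      set mF : Fin M := ⟨m, hmM'⟩ with hmF
      set sm : Finset (Fin M) := Finset.univ.filter (fun l => (l : ℕ) < m) with hsm
      have hmem_sm : ∀ l : Fin M, l ∈ sm ↔ (l : ℕ) < m := by
        intro l; simp [hsm]
      set ξ : H := u mF - ∑ l ∈ sm, ⟪v l, u mF⟫_ℂ • v l with hξ
      have humF1 : ‖u mF‖ = 1 := hu_on.1 mF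
      have hnemF : ∀ l : Fin M, (l : ℕ) < m → l ≠ mF := by
        intro l hlm h
        rw [h] at hlm
        simp [hmF] at hlm
      have hinn_small : ∀ l ∈ sm, ((‖⟪v l, u mF⟫_ℂ‖₊ : ℝ≥0∞)) ≤ c * η := by
        intro l hl
        have hlm := (hmem_sm l).mp hl
        have hlu0 : ⟪u l, u mF⟫_ℂ = 0 := by
          have h0 := orthonormal_iff_ite.mp hu_on l mF
          rwa [if_neg (hnemF l hlm)] at h0
        have heq : ⟪v l, u mF⟫_ℂ = ⟪v l - u l, u mF⟫_ℂ := by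
          rw [inner_sub_left, hlu0, sub_zero]
        rw [heq]
        calc ((‖⟪v l - u l, u mF⟫_ℂ‖₊ : ℝ≥0∞))
            ≤ (‖v l - u l‖₊ : ℝ≥0∞) * (‖u mF‖₊ : ℝ≥0∞) := by
              rw [← ENNReal.coe_mul]
              exact_mod_cast nnnorm_inner_le_nnnorm _ _
          _ = (‖v l - u l‖₊ : ℝ≥0∞) := by
              rw [← ofReal_norm_eq_coe_nnnorm (u mF), humF1, ENNReal.ofReal_one, mul_one]
          _ ≤ norm3 b (v l - u l) := coe_nnnorm_le_norm3 b _
          _ ≤ c * η := hv4 l hlm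
      have hcK : c ≤ K := by
        rw [hK]
        calc c = 1 * 1 * c := by ring
          _ ≤ (M : ℝ≥0∞) * (B + 1) * c := by
              refine mul_le_mul' (mul_le_mul' ?_ le_add_self) le_rfl
              exact_mod_cast Nat.one_le_cast.mpr hM
      have hcη1 : c * η ≤ 1 := by
        calc c * η ≤ K * η := mul_le_mul_left hcK η
          _ ≤ ENNReal.ofReal (1/2) := hKη
          _ ≤ 1 := ENNReal.ofReal_le_one.mpr (by norm_num)
      have hv3' : ∀ l ∈ sm, norm3 b (v l) ≤ B + 1 := by
        intro l hl
        have hlm := (hmem_sm l).mp hl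
        have hvl : v l = u l + (v l - u l) := by abel
        calc norm3 b (v l) = norm3 b (u l + (v l - u l)) := by rw [← hvl]
          _ ≤ norm3 b (u l) + norm3 b (v l - u l) := norm3_add_le b _ _
          _ ≤ B + 1 := add_le_add (hBi l) ((hv4 l hlm).trans hcη1)
      have hξdiff : norm3 b (ξ - u mF) ≤ K * η := by
        have h0 : ξ - u mF = -(∑ l ∈ sm, ⟪v l, u mF⟫_ℂ • v l) := by rw [hξ]; abel
        rw [h0, norm3_neg]
        calc norm3 b (∑ l ∈ sm, ⟪v l, u mF⟫_ℂ • v l)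
            ≤ ∑ l ∈ sm, norm3 b (⟪v l, u mF⟫_ℂ • v l) := norm3_sum_le b _ _
          _ = ∑ l ∈ sm, (‖⟪v l, u mF⟫_ℂ‖₊ : ℝ≥0∞) * norm3 b (v l) :=
              Finset.sum_congr rfl fun l _ => norm3_smul b _ _
          _ ≤ ∑ _l ∈ sm, (c * η) * (B + 1) :=
              Finset.sum_le_sum fun l hl => mul_le_mul' (hinn_small l hl) (hv3' l hl)
          _ = (sm.card : ℝ≥0∞) * ((c * η) * (B + 1)) := by
              rw [Finset.sum_const, nsmul_eq_mul]
          _ ≤ (M : ℝ≥0∞) * ((c * η) * (B + 1)) := by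
              refine mul_le_mul_left ?_ _
              exact_mod_cast Nat.cast_le.mpr (by
                calc sm.card ≤ Finset.univ.card := Finset.card_le_card (Finset.filter_subset _ _)
                  _ = M := by simp)
          _ = K * η := by rw [hK]; ring
      have hξnd : ‖ξ - u mF‖ ≤ 1/2 := by
        have h1 : ENNReal.ofReal ‖ξ - u mF‖ ≤ ENNReal.ofReal (1/2) := by
          rw [ofReal_norm_eq_coe_nnnorm]
          exact le_trans (coe_nnnorm_le_norm3 b _) (le_trans hξdiff hKη)
        exact (ENNReal.ofReal_le_ofReal_iff (by norm_num)).mp h1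
      have hr : 1/2 ≤ ‖ξ‖ := by
        have h := norm_sub_norm_le (u mF) ξ
        rw [humF1, norm_sub_rev (u mF) ξ] at h
        linarith
      have hrpos : 0 < ‖ξ‖ := lt_of_lt_of_le (by norm_num) hr
      set vm : H := ((‖ξ‖⁻¹ : ℝ) : ℂ) • ξ with hvm
      set v' : Fin M → H := Function.update v mF vm with hv'
      have hv'old : ∀ l : Fin M, (l : ℕ) < m → v' l = v l := by
        intro l hlm
        rw [hv']
        exact Function.update_of_ne (hnemF l hlm) _ _
      have hv'mF : v' mF = vm := by rw [hv']; exact Function.update_self _ _ _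
      have hinn_xi : ∀ l : Fin M, (l : ℕ) < m → ⟪v l, ξ⟫_ℂ = 0 := by
        intro l hlm
        rw [hξ, inner_sub_right, inner_sum]
        have hterm : ∀ l' ∈ sm, ⟪v l, ⟪v l', u mF⟫_ℂ • v l'⟫_ℂ
            = if l = l' then ⟪v l', u mF⟫_ℂ else 0 := by
          intro l' hl'
          rw [inner_smul_right, hv3 l l' hlm ((hmem_sm l').mp hl')]
          by_cases h : l = l' <;> simp [h]
        rw [Finset.sum_congr rfl hterm, Finset.sum_ite_eq sm l _,
          if_pos ((hmem_sm l).mpr hlm), sub_self]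
      have hON : ∀ i j : Fin M, (i : ℕ) < m + 1 → (j : ℕ) < m + 1 →
          ⟪v' i, v' j⟫_ℂ = if i = j then 1 else 0 := by
        have hfv : ∀ i : Fin M, (i : ℕ) < m + 1 → ¬((i : ℕ) < m) → i = mF := by
          intro i h1 h2
          apply Fin.ext
          show (i : ℕ) = m
          omega
        intro i j hi hj
        by_cases hi' : (i : ℕ) < m <;> by_cases hj' : (j : ℕ) < m
        · rw [hv'old i hi', hv'old j hj']
          exact hv3 i j hi' hj'
        · have hjm : j = mF := hfv j hj hj'
          subst hjm
          rw [hv'old i hi', hv'mF, hvm, inner_smul_right, hinn_xi i hi', mul_zero,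
            if_neg (hnemF i hi')]
        · have him : i = mF := hfv i hi hi'
          subst him
          rw [hv'mF, hv'old j hj', hvm, inner_smul_left, ← inner_conj_symm,
            hinn_xi j hj', map_zero, mul_zero, if_neg (Ne.symm (hnemF j hj'))]
        · have him : i = mF := hfv i hi hi'
          have hjm : j = mF := hfv j hj hj'
          subst him; subst hjm
          rw [hv'mF, hvm, inner_smul_left, inner_smul_right, inner_self_eq_norm_sq_to_K,
            if_pos rfl, Complex.conj_ofReal]
          have hne : ((‖ξ‖ : ℝ) : ℂ) ≠ 0 := by
            exact_mod_cast Complex.ofReal_ne_zero.mpr hrpos.ne'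
          push_cast
          field_simp
          rfl
      have hvm_est : norm3 b (vm - u mF) ≤ 2 * K * (B + 1) * η := by
        have hsplit : vm - u mF
            = ((‖ξ‖⁻¹ : ℝ) : ℂ) • (ξ - u mF) + ((((‖ξ‖⁻¹ : ℝ) : ℂ) - 1) • u mF) := by
          rw [hvm, smul_sub, sub_smul, one_smul]
          module
        have hinv2 : ‖ξ‖⁻¹ ≤ 2 := by
          have := inv_anti₀ (show (0:ℝ) < 1/2 by norm_num) hr
          simpa using this
        have hcoe1 : ((‖(((‖ξ‖⁻¹ : ℝ) : ℂ))‖₊ : ℝ≥0∞)) ≤ 2 := by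
          rw [← ofReal_norm_eq_coe_nnnorm, Complex.norm_real, Real.norm_eq_abs,
            abs_of_nonneg (inv_nonneg.mpr (norm_nonneg _))]
          calc ENNReal.ofReal (‖ξ‖⁻¹) ≤ ENNReal.ofReal 2 := ENNReal.ofReal_le_ofReal hinv2
            _ = 2 := by simp
        have habs : |‖ξ‖⁻¹ - 1| ≤ 2 * ‖ξ - u mF‖ := by
          have h1 : ‖ξ‖⁻¹ - 1 = (1 - ‖ξ‖) * ‖ξ‖⁻¹ := by field_simp
          rw [h1, abs_mul, abs_of_nonneg (inv_nonneg.mpr (norm_nonneg _))]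
          have h2 : |1 - ‖ξ‖| ≤ ‖ξ - u mF‖ := by
            have h3 := abs_norm_sub_norm_le ξ (u mF)
            rw [humF1] at h3
            rwa [abs_sub_comm]
          calc |1 - ‖ξ‖| * ‖ξ‖⁻¹ ≤ ‖ξ - u mF‖ * 2 :=
                mul_le_mul h2 hinv2 (inv_nonneg.mpr (norm_nonneg _)) (norm_nonneg _)
            _ = 2 * ‖ξ - u mF‖ := mul_comm _ _
        have hcoe2 : ((‖((((‖ξ‖⁻¹ : ℝ) : ℂ)) - 1)‖₊ : ℝ≥0∞)) ≤ 2 * (K * η) := by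
          rw [← ofReal_norm_eq_coe_nnnorm]
          have hcast : ‖((((‖ξ‖⁻¹ : ℝ) : ℂ)) - 1)‖ = |‖ξ‖⁻¹ - 1| := by
            rw [show ((((‖ξ‖⁻¹ : ℝ) : ℂ)) - 1) = (((‖ξ‖⁻¹ - 1 : ℝ)) : ℂ) by push_cast; ring,
              Complex.norm_real, Real.norm_eq_abs]
          rw [hcast]
          calc ENNReal.ofReal |‖ξ‖⁻¹ - 1| ≤ ENNReal.ofReal (2 * ‖ξ - u mF‖) :=
                ENNReal.ofReal_le_ofReal habs
            _ = 2 * ENNReal.ofReal ‖ξ - u mF‖ := by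
                rw [ENNReal.ofReal_mul (by norm_num)]
                congr 1
                simp
            _ ≤ 2 * (K * η) := by
                refine mul_le_mul_right ?_ 2
                rw [ofReal_norm_eq_coe_nnnorm]
                exact (coe_nnnorm_le_norm3 b _).trans hξdiff
        calc norm3 b (vm - u mF)
            ≤ norm3 b (((‖ξ‖⁻¹ : ℝ) : ℂ) • (ξ - u mF))
              + norm3 b (((((‖ξ‖⁻¹ : ℝ) : ℂ)) - 1) • u mF) := by
              rw [hsplit]; exact norm3_add_le b _ _
          _ = ((‖(((‖ξ‖⁻¹ : ℝ) : ℂ))‖₊ : ℝ≥0∞)) * norm3 b (ξ - u mF)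
              + ((‖((((‖ξ‖⁻¹ : ℝ) : ℂ)) - 1)‖₊ : ℝ≥0∞)) * norm3 b (u mF) := by
              rw [norm3_smul, norm3_smul]
          _ ≤ 2 * (K * η) + (2 * (K * η)) * B :=
              add_le_add (mul_le_mul' hcoe1 hξdiff) (mul_le_mul' hcoe2 (hBi mF))
          _ = 2 * K * (B + 1) * η := by ring
      refine ⟨v', ?_, ?_, hON, ?_⟩
      · intro i hi
        rw [hv'old i (lt_of_lt_of_le hi hdm)]
        exact hv1 i hi
      · intro i hi
        by_cases hi' : (i : ℕ) < m
        · rw [hv'old i hi']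
          exact hv2 i hi'
        · have him : i = mF := by
            apply Fin.ext
            show (i : ℕ) = m
            omega
          subst him
          rw [hv'mF, hvm]
          refine Submodule.smul_mem _ _ (Submodule.sub_mem _ ?_ ?_)
          · exact Submodule.mem_sup_left (huCM mF)
          · exact Submodule.sum_mem _ fun l hl =>
              Submodule.smul_mem _ _ (hv2 l ((hmem_sm l).mp hl))
      · intro i hi
        by_cases hi' : (i : ℕ) < m
        · rw [hv'old i hi']
          exact (hv4 i hi').trans (mul_le_mul_left le_self_add _)
        · have him : i = mF := by
            apply Fin.ext
            show (i : ℕ) = m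
            omega
          subst him
          rw [hv'mF]
          exact hvm_est.trans (mul_le_mul_left le_add_self _)
  -- final assembly
  obtain ⟨c, hc1, hcT, θ, hθ, HKEY⟩ := KEY M hdM le_rfl
  set Cc : ℝ≥0∞ := (M : ℝ≥0∞) * c with hCc
  have hCcT : Cc ≠ ⊤ := ENNReal.mul_ne_top (ENNReal.natCast_ne_top _) hcT
  have hCc0 : Cc ≠ 0 := by
    rw [hCc]
    refine mul_ne_zero ?_ (zero_lt_one.trans_le hc1).ne'
    exact_mod_cast (Nat.cast_ne_zero (R := ℝ≥0∞)).mpr (by omega)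
  refine ⟨min θ (ε / (Cc.toReal + 1)), lt_min hθ (by positivity), ?_⟩
  intro φ hVex hφ3 hηδ
  obtain ⟨V, hVz⟩ := hVex
  have hηθ : (∑ j : Fin N, norm3 b (φ j - z j)) ≤ ENNReal.ofReal θ :=
    le_of_lt (lt_of_lt_of_le hηδ (ENNReal.ofReal_le_ofReal (min_le_left _ _)))
  obtain ⟨v, hv1, hv2, hv3, hv4⟩ := HKEY φ V hVz hηθ
  haveI hmapfd : FiniteDimensional ℂ (E.map (V.toLinearEquiv : H ≃ₗ[ℂ] H).toLinearMap) :=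
    Module.Finite.map E _
  set G : Submodule ℂ H := Gm V with hG
  haveI hGfd : FiniteDimensional ℂ G := by
    show FiniteDimensional ℂ (CM ⊔ E.map (V.toLinearEquiv : H ≃ₗ[ℂ] H).toLinearMap : Submodule ℂ H)
    infer_instance
  have hCMG : CM ≤ G := le_sup_left
  have hMn : M ≤ finrank ℂ G := hfrCM ▸ Submodule.finrank_mono hCMG
  obtain ⟨U, hU⟩ := exists_unitary_of_orthonormal G u v (fun i => hCMG (huCM i))
      (fun i => hv2 i i.2) hMn hu_on (fun i j => hv3 i j i.2 j.2)
  refine ⟨U, ?_, ?_⟩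
  · intro j
    have heq : Set.EqOn (⇑((U.toLinearEquiv : H ≃ₗ[ℂ] H) : H →ₗ[ℂ] H))
        (⇑((V.toLinearEquiv : H ≃ₗ[ℂ] H) : H →ₗ[ℂ] H)) (u '' {i : Fin M | (i : ℕ) < d}) := by
      rintro x ⟨i, hi, rfl⟩
      show U (u i) = V (u i)
      rw [hU i, hv1 i hi]
    have h2 := LinearMap.eqOn_span heq (hspanz j)
    have hUz : U (z j) = V (z j) := h2
    rw [hUz, hVz j]
  · intro k hk
    have hbkCM : b k ∈ CM := by rw [hCM]; exact Submodule.subset_span ⟨k, hk, rfl⟩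
    set xk : CM := ⟨b k, hbkCM⟩ with hxk
    have hexp : (b k : H) = ∑ i : Fin M, uB.repr xk i • u i := by
      have h2 := congrArg (Subtype.val : CM → H) (uB.sum_repr xk)
      conv_lhs => rw [show (b k : H) = ((xk : CM) : H) from rfl]
      rw [← h2, AddSubmonoidClass.coe_finset_sum]
      simp [Submodule.coe_smul]
      rfl
    have hUexp : U (b k) = ∑ i : Fin M, uB.repr xk i • v i := by
      conv_lhs => rw [hexp]
      rw [map_sum]
      refine Finset.sum_congr rfl fun i _ => ?_
      rw [LinearIsometryEquiv.map_smul, hU i]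
    have hdiffU : U (b k) - b k = ∑ i : Fin M, uB.repr xk i • (v i - u i) := by
      rw [hUexp]
      conv_lhs => rw [hexp]
      rw [← Finset.sum_sub_distrib]
      exact Finset.sum_congr rfl fun i _ => (smul_sub _ _ _).symm
    have hcoefle : ∀ i : Fin M, ((‖uB.repr xk i‖₊ : ℝ≥0∞)) ≤ 1 := by
      intro i
      have h3 : uB.repr xk i = ⟪uB i, xk⟫_ℂ := uB.repr_apply_apply xk i
      rw [h3, ← ofReal_norm_eq_coe_nnnorm]
      have hxknorm : ‖xk‖ = 1 := by
        have h4 : ‖xk‖ = ‖(b k : H)‖ := rfl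
        rw [h4]
        exact b.orthonormal.1 k
      have h1 : ‖⟪uB i, xk⟫_ℂ‖ ≤ 1 := by
        calc ‖⟪uB i, xk⟫_ℂ‖ ≤ ‖uB i‖ * ‖xk‖ := norm_inner_le_norm _ _
          _ = 1 := by rw [hxknorm, uB.orthonormal.1 i, one_mul]
      calc ENNReal.ofReal ‖⟪uB i, xk⟫_ℂ‖ ≤ ENNReal.ofReal 1 := ENNReal.ofReal_le_ofReal h1
        _ = 1 := ENNReal.ofReal_one
    have hmain : norm3 b (U (b k) - b k) ≤ Cc * (∑ j : Fin N, norm3 b (φ j - z j)) := by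
      rw [hdiffU]
      calc norm3 b (∑ i : Fin M, uB.repr xk i • (v i - u i))
          ≤ ∑ i : Fin M, norm3 b (uB.repr xk i • (v i - u i)) := norm3_sum_le b _ _
        _ = ∑ i : Fin M, (‖uB.repr xk i‖₊ : ℝ≥0∞) * norm3 b (v i - u i) :=
            Finset.sum_congr rfl fun i _ => norm3_smul b _ _
        _ ≤ ∑ _i : Fin M, 1 * (c * (∑ j : Fin N, norm3 b (φ j - z j))) :=
            Finset.sum_le_sum fun i _ => mul_le_mul' (hcoefle i) (hv4 i i.2)
        _ = (M : ℝ≥0∞) * (c * (∑ j : Fin N, norm3 b (φ j - z j))) := by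
            rw [Finset.sum_const, nsmul_eq_mul]
            simp
        _ = Cc * (∑ j : Fin N, norm3 b (φ j - z j)) := by rw [hCc]; ring
    have hstrict : Cc * (∑ j : Fin N, norm3 b (φ j - z j)) < ENNReal.ofReal ε := by
      calc Cc * (∑ j : Fin N, norm3 b (φ j - z j))
          < Cc * ENNReal.ofReal (min θ (ε / (Cc.toReal + 1))) :=
            ENNReal.mul_lt_mul_right hCc0 hCcT hηδ
        _ ≤ Cc * ENNReal.ofReal (ε / (Cc.toReal + 1)) :=
            mul_le_mul_right (ENNReal.ofReal_le_ofReal (min_le_right _ _)) _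
        _ = ENNReal.ofReal (Cc.toReal * (ε / (Cc.toReal + 1))) := by
            nth_rewrite 1 [← ENNReal.ofReal_toReal hCcT]
            rw [← ENNReal.ofReal_mul ENNReal.toReal_nonneg]
        _ ≤ ENNReal.ofReal ε := by
            apply ENNReal.ofReal_le_ofReal
            have h0 : (0:ℝ) ≤ Cc.toReal := ENNReal.toReal_nonneg
            have h5 : Cc.toReal * (ε / (Cc.toReal + 1)) = ε * (Cc.toReal / (Cc.toReal + 1)) := by
              ring
            rw [h5]
            have hle1 : Cc.toReal / (Cc.toReal + 1) ≤ 1 := by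
              rw [div_le_one (by positivity)]
              linarith
            calc ε * (Cc.toReal / (Cc.toReal + 1)) ≤ ε * 1 :=
                  mul_le_mul_of_nonneg_left hle1 (le_of_lt hε)
              _ = ε := mul_one ε
    constructor
    · exact lt_of_le_of_lt hmain hstrict
    · have h6 : U (b k) = b k + (U (b k) - b k) := by abel
      rw [h6]
      refine lt_of_le_of_lt (norm3_add_le b _ _) ?_
      refine ENNReal.add_lt_top.mpr ⟨?_, ?_⟩
      · rw [norm3_basis]
        exact ENNReal.pow_lt_top (ENNReal.natCast_lt_top _)
      · exact lt_of_le_of_lt hmain (lt_of_lt_of_le hstrict le_top)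


end main
end

section
/- Let W : [0,1] → ℝ be continuously differentiable, μ : [0,1] → ℝ four times continuously differentiable, c ∈ ℝ, C₀ > 0, and let j ≥ 1 be an integer. Let (λ_k)_{k≥1} be a strictly increasing sequence of real numbers with |λ_k − k²π² − c| ≤ C₀ for all k, and let (φ_k)_{k≥1} be twice continuously differentiable real-valued functions on [0,1] such that for every k: φ_k(0) = φ_k(1) = 0, −φ_k'' + W·φ_k = λ_k·φ_k on [0,1], sup_{x∈[0,1]} |φ_k(x) − √2·sin(kπx)| ≤ C₀/k, and sup_{x∈[0,1]} |φ_k'(x) − √2·kπ·cos(kπx)| ≤ C₀. Then there exist C' > 0 and K ∈ ℕ such that for every k ≥ K: | k³·∫₀¹ μ(x)φ_j(x)φ_k(x) dx − (2√2/π³)·( (−1)^k·μ'(1)·φ_j'(1) − μ'(0)·φ_j'(0) ) | ≤ C'/k. -/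
open Set MeasureTheory intervalIntegral

lemma peel1 {f : ℝ → ℝ} {n : ℕ} (h : ContDiff ℝ (n+1 : ℕ) f) :
    Differentiable ℝ f ∧ ContDiff ℝ (n : ℕ) (deriv f) := by
  have h' : ContDiff ℝ ((n : WithTop ℕ∞) + 1) f := by exact_mod_cast h
  rw [contDiff_succ_iff_deriv] at h'
  exact ⟨h'.1, h'.2.2⟩

lemma wronskian_ftc (u u1 u2 v v1 v2 : ℝ → ℝ)
    (hu_cont : ContinuousOn u (Icc 0 1)) (hu1_cont : ContinuousOn u1 (Icc 0 1))
    (hv_cont : ContinuousOn v (Icc 0 1)) (hv1_cont : ContinuousOn v1 (Icc 0 1))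
    (hu : ∀ x ∈ Ioo (0:ℝ) 1, HasDerivAt u (u1 x) x)
    (hu1 : ∀ x ∈ Ioo (0:ℝ) 1, HasDerivAt u1 (u2 x) x)
    (hv : ∀ x ∈ Ioo (0:ℝ) 1, HasDerivAt v (v1 x) x)
    (hv1 : ∀ x ∈ Ioo (0:ℝ) 1, HasDerivAt v1 (v2 x) x)
    (hint : IntervalIntegrable (fun x => u2 x * v x - u x * v2 x) volume 0 1) :
    ∫ x in (0:ℝ)..1, (u2 x * v x - u x * v2 x) =
      (u1 1 * v 1 - u 1 * v1 1) - (u1 0 * v 0 - u 0 * v1 0) := by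
  have hcont : ContinuousOn (fun x => u1 x * v x - u x * v1 x) (Icc 0 1) :=
    (hu1_cont.mul hv_cont).sub (hu_cont.mul hv1_cont)
  have hderiv : ∀ x ∈ Ioo (0:ℝ) 1,
      HasDerivAt (fun x => u1 x * v x - u x * v1 x) (u2 x * v x - u x * v2 x) x := by
    intro x hx
    have := ((hu1 x hx).mul (hv x hx)).sub ((hu x hx).mul (hv1 x hx))
    exact this.congr_deriv (by ring)
  exact integral_eq_sub_of_hasDerivAt_of_le (by norm_num) hcont hderiv hint

set_option maxHeartbeats 1000000

/-- asymptotic expansion of the matrix elements `k³⟨μφ_j, φ_k⟩` for Dirichlet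
eigenfunctions `φ_k` of `−∂²ₓₓ + W` on `[0,1]` satisfying the classical eigenvalue and
eigenfunction asymptotics:
`k³ ∫₀¹ μ φ_j φ_k = (2√2/π³)((−1)^k μ'(1)φ_j'(1) − μ'(0)φ_j'(0)) + O(1/k)`. -/
theorem stmt_13 (W μ : ℝ → ℝ) (c C0 : ℝ) (hC0 : 0 < C0) (j : ℕ) (hj : 1 ≤ j)
    (hW : ContDiff ℝ 1 W) (hμ : ContDiff ℝ 4 μ)
    (lam : ℕ → ℝ) (φ : ℕ → ℝ → ℝ)
    (hmono : ∀ k l : ℕ, 1 ≤ k → k < l → lam k < lam l)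
    (hasym : ∀ k : ℕ, 1 ≤ k → |lam k - (k : ℝ) ^ 2 * Real.pi ^ 2 - c| ≤ C0)
    (hreg : ∀ k : ℕ, 1 ≤ k → ContDiff ℝ 2 (φ k))
    (hbc : ∀ k : ℕ, 1 ≤ k → φ k 0 = 0 ∧ φ k 1 = 0)
    (hode : ∀ k : ℕ, 1 ≤ k → ∀ x ∈ Set.Icc (0 : ℝ) 1,
      -(deriv (deriv (φ k))) x + W x * φ k x = lam k * φ k x)
    (hsup : ∀ k : ℕ, 1 ≤ k → ∀ x ∈ Set.Icc (0 : ℝ) 1,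
      |φ k x - Real.sqrt 2 * Real.sin ((k : ℝ) * Real.pi * x)| ≤ C0 / k)
    (hsup' : ∀ k : ℕ, 1 ≤ k → ∀ x ∈ Set.Icc (0 : ℝ) 1,
      |deriv (φ k) x - Real.sqrt 2 * (k : ℝ) * Real.pi * Real.cos ((k : ℝ) * Real.pi * x)|
        ≤ C0) :
    ∃ C' : ℝ, 0 < C' ∧ ∃ K : ℕ, ∀ k : ℕ, K ≤ k →
      |(k : ℝ) ^ 3 * (∫ x in (0 : ℝ)..1, μ x * φ j x * φ k x)
          - (2 * Real.sqrt 2 / Real.pi ^ 3) *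
              ((-1 : ℝ) ^ k * deriv μ 1 * deriv (φ j) 1 - deriv μ 0 * deriv (φ j) 0)|
        ≤ C' / k := by
  obtain ⟨hμd, hμ1⟩ := peel1 (n := 3) (show ContDiff ℝ ((3:ℕ)+1) μ from by exact_mod_cast hμ)
  obtain ⟨hμ1d, hμ2⟩ := peel1 (n := 2) hμ1
  obtain ⟨hμ2d, hμ3⟩ := peel1 (n := 1) hμ2
  obtain ⟨hμ3d, hμ4⟩ := peel1 (n := 0) hμ3
  have hμ4c : Continuous (deriv (deriv (deriv (deriv μ)))) := contDiff_zero.mp hμ4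
  obtain ⟨hWd, hW1⟩ := peel1 (n := 0) (show ContDiff ℝ ((0:ℕ)+1) W from by exact_mod_cast hW)
  have hW'c : Continuous (deriv W) := contDiff_zero.mp hW1
  obtain ⟨hφjd, hφj1⟩ := peel1 (n := 1) (show ContDiff ℝ ((1:ℕ)+1) (φ j) from by exact_mod_cast hreg j hj)
  obtain ⟨hφj1d, hφj2⟩ := peel1 (n := 0) hφj1
  have hφj2c : Continuous (deriv (deriv (φ j))) := contDiff_zero.mp hφj2
  -- abbreviations
  set μ1 := deriv μ with hμ1def
  set μ2 := deriv μ1 with hμ2def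
  set μ3 := deriv μ2 with hμ3def
  set μ4 := deriv μ3 with hμ4def
  set ψ := deriv (φ j) with hψdef
  set ψ2 := deriv (deriv (φ j)) with hψ2def
  -- j-th eigen-equation rearranged
  have heq : ∀ x ∈ Icc (0:ℝ) 1, ψ2 x = (W x - lam j) * φ j x := by
    intro x hx
    have h0 := hode j hj x hx
    rw [sub_mul]; linarith
  -- functions
  set p : ℝ → ℝ := fun x => deriv W x * φ j x + (W x - lam j) * ψ x with hpdef
  set f : ℝ → ℝ := fun x => μ x * φ j x with hfdef
  set f1 : ℝ → ℝ := fun x => μ1 x * φ j x + μ x * ψ x with hf1def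
  set F2 : ℝ → ℝ := fun x => μ2 x * φ j x + 2 * (μ1 x * ψ x) + μ x * ψ2 x with hF2def
  set g : ℝ → ℝ := fun x => -(μ2 x * φ j x) - 2 * (μ1 x * ψ x) + lam j * (μ x * φ j x) with hgdef
  set g1 : ℝ → ℝ := fun x => -(μ3 x * φ j x) - 3 * (μ2 x * ψ x) - 2 * (μ1 x * ψ2 x)
      + lam j * (μ1 x * φ j x) + lam j * (μ x * ψ x) with hg1def
  set G : ℝ → ℝ := fun x => -(μ4 x * φ j x) - 4 * (μ3 x * ψ x) - 5 * (μ2 x * ψ2 x)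
      - 2 * (μ1 x * p x) + lam j * (μ2 x * φ j x) + 2 * lam j * (μ1 x * ψ x)
      + lam j * (μ x * ψ2 x) with hGdef
  set h : ℝ → ℝ := fun x => -(G x) + W x * g x with hhdef
  -- continuity
  have hφjc : Continuous (φ j) := (hreg j hj).continuous
  have hψc : Continuous ψ := hφj1.continuous
  have hμc : Continuous μ := hμ.continuous
  have hμ1c : Continuous μ1 := hμ1.continuous
  have hμ2c : Continuous μ2 := hμ2.continuous
  have hμ3c : Continuous μ3 := hμ3.continuous
  have hWc : Continuous W := hW.continuous
  have hpc : Continuous p := by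
    exact ((hW'c.mul hφjc).add (((hWc.sub continuous_const)).mul hψc))
  have hfc : Continuous f := hμc.mul hφjc
  have hf1c : Continuous f1 := (hμ1c.mul hφjc).add (hμc.mul hψc)
  have hF2c : Continuous F2 := ((hμ2c.mul hφjc).add (continuous_const.mul (hμ1c.mul hψc))).add (hμc.mul hφj2c)
  have hgc : Continuous g := ((hμ2c.mul hφjc).neg.sub (continuous_const.mul (hμ1c.mul hψc))).add
      (continuous_const.mul (hμc.mul hφjc))
  have hg1c : Continuous g1 := by
    refine ((((hμ3c.mul hφjc).neg.sub (continuous_const.mul (hμ2c.mul hψc))).sub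
      (continuous_const.mul (hμ1c.mul hφj2c))).add
      (continuous_const.mul (hμ1c.mul hφjc))).add (continuous_const.mul (hμc.mul hψc))
  have hGc : Continuous G := by
    refine ((((((hμ4c.mul hφjc).neg.sub (continuous_const.mul (hμ3c.mul hψc))).sub
      (continuous_const.mul (hμ2c.mul hφj2c))).sub
      (continuous_const.mul (hμ1c.mul hpc))).add
      (continuous_const.mul (hμ2c.mul hφjc))).add
      (continuous_const.mul (hμ1c.mul hψc))).add (continuous_const.mul (hμc.mul hφj2c))
  have hhc : Continuous h := hGc.neg.add (hWc.mul hgc)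
  -- global derivatives
  have Hf : ∀ x, HasDerivAt f (f1 x) x := by
    intro x
    have := ((hμd x).hasDerivAt.mul (hφjd x).hasDerivAt)
    exact this
  have Hf1 : ∀ x, HasDerivAt f1 (F2 x) x := by
    intro x
    have := (((hμ1d x).hasDerivAt.mul (hφjd x).hasDerivAt)).add
      (((hμd x).hasDerivAt.mul (hφj1d x).hasDerivAt))
    exact this.congr_deriv (by rw [hF2def]; ring)
  have Hg : ∀ x, HasDerivAt g (g1 x) x := by
    intro x
    have := ((((hμ2d x).hasDerivAt.mul (hφjd x).hasDerivAt).neg.sub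
      (((hμ1d x).hasDerivAt.mul (hφj1d x).hasDerivAt).const_mul 2)).add
      (((hμd x).hasDerivAt.mul (hφjd x).hasDerivAt).const_mul (lam j)))
    exact this.congr_deriv (by rw [hg1def]; ring)
  have Hψ2 : ∀ x ∈ Ioo (0:ℝ) 1, HasDerivAt ψ2 (p x) x := by
    intro x hx
    have hnhds : Icc (0:ℝ) 1 ∈ nhds x := Icc_mem_nhds hx.1 hx.2
    have hev : ψ2 =ᶠ[nhds x] fun y => (W y - lam j) * φ j y :=
      Filter.eventuallyEq_of_mem hnhds (fun y hy => heq y hy)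
    have hR : HasDerivAt (fun y => (W y - lam j) * φ j y) (p x) x := by
      exact (((hWd x).hasDerivAt.sub_const (lam j)).mul (hφjd x).hasDerivAt)
    exact hR.congr_of_eventuallyEq hev
  have Hg1 : ∀ x ∈ Ioo (0:ℝ) 1, HasDerivAt g1 (G x) x := by
    intro x hx
    have := (((((hμ3d x).hasDerivAt.mul (hφjd x).hasDerivAt).neg.sub
      (((hμ2d x).hasDerivAt.mul (hφj1d x).hasDerivAt).const_mul 3)).sub
      (((hμ1d x).hasDerivAt.mul (Hψ2 x hx)).const_mul 2)).add
      (((hμ1d x).hasDerivAt.mul (hφjd x).hasDerivAt).const_mul (lam j))).add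
      (((hμd x).hasDerivAt.mul (hφj1d x).hasDerivAt).const_mul (lam j))
    exact this.congr_deriv (by rw [hGdef]; ring)
  have hbcj0 : φ j 0 = 0 := (hbc j hj).1
  have hbcj1 : φ j 1 = 0 := (hbc j hj).2
  have hkey : ∀ k : ℕ, 1 ≤ k →
      (lam k)^2 * (∫ x in (0:ℝ)..1, μ x * φ j x * φ k x)
        = (∫ x in (0:ℝ)..1, h x * φ k x)
          + (2 * (μ1 1 * ψ 1) * deriv (φ k) 1 - 2 * (μ1 0 * ψ 0) * deriv (φ k) 0) := by
    intro k hk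
    obtain ⟨hφkd, hφk1⟩ := peel1 (n := 1)
      (show ContDiff ℝ ((1:ℕ)+1) (φ k) from by exact_mod_cast hreg k hk)
    obtain ⟨hφk1d, hφk2⟩ := peel1 (n := 0) hφk1
    have hφkc : Continuous (φ k) := hφkd.continuous
    have hψkc : Continuous (deriv (φ k)) := hφk1.continuous
    have hψk2c : Continuous (deriv (deriv (φ k))) := contDiff_zero.mp hφk2
    have hbck0 : φ k 0 = 0 := (hbc k hk).1
    have hbck1 : φ k 1 = 0 := (hbc k hk).2
    -- first integration by parts
    have e1 : lam k * (∫ x in (0:ℝ)..1, μ x * φ j x * φ k x)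
        = ∫ x in (0:ℝ)..1, (-(f x * deriv (deriv (φ k)) x) + W x * f x * φ k x) := by
      rw [← intervalIntegral.integral_const_mul]
      apply intervalIntegral.integral_congr
      intro x hx
      rw [uIcc_of_le (by norm_num : (0:ℝ) ≤ 1)] at hx
      have h0 := hode k hk x hx
      simp only [hfdef]
      linear_combination (-(μ x * φ j x)) * h0
    have e2 : (∫ x in (0:ℝ)..1, (-(f x * deriv (deriv (φ k)) x) + W x * f x * φ k x))
        = -(∫ x in (0:ℝ)..1, f x * deriv (deriv (φ k)) x)
          + ∫ x in (0:ℝ)..1, W x * f x * φ k x := by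
      rw [intervalIntegral.integral_add (f := fun x => -(f x * deriv (deriv (φ k)) x))
        (g := fun x => W x * f x * φ k x) ((hfc.mul hψk2c).neg.intervalIntegrable _ _)
        (((hWc.mul hfc).mul hφkc).intervalIntegrable _ _), intervalIntegral.integral_neg]
    have e3 : (∫ x in (0:ℝ)..1, (F2 x * φ k x - f x * deriv (deriv (φ k)) x)) = 0 := by
      rw [wronskian_ftc f f1 F2 (φ k) (deriv (φ k)) (deriv (deriv (φ k)))
        hfc.continuousOn hf1c.continuousOn hφkc.continuousOn hψkc.continuousOn
        (fun x _ => Hf x) (fun x _ => Hf1 x) (fun x _ => (hφkd x).hasDerivAt)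
        (fun x _ => (hφk1d x).hasDerivAt)
        (((hF2c.mul hφkc).sub (hfc.mul hψk2c)).intervalIntegrable _ _)]
      simp [hfdef, hf1def, hbcj0, hbcj1, hbck0, hbck1]
    have e4 : (∫ x in (0:ℝ)..1, f x * deriv (deriv (φ k)) x)
        = ∫ x in (0:ℝ)..1, F2 x * φ k x := by
      rw [intervalIntegral.integral_sub (f := fun x => F2 x * φ k x)
        (g := fun x => f x * deriv (deriv (φ k)) x) ((hF2c.mul hφkc).intervalIntegrable _ _)
        ((hfc.mul hψk2c).intervalIntegrable _ _), sub_eq_zero] at e3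
      exact e3.symm
    have e5 : lam k * (∫ x in (0:ℝ)..1, μ x * φ j x * φ k x)
        = ∫ x in (0:ℝ)..1, g x * φ k x := by
      rw [e1, e2, e4]
      rw [← intervalIntegral.integral_neg, ← intervalIntegral.integral_add
        (f := fun x => -(F2 x * φ k x)) (g := fun x => W x * f x * φ k x)
        ((hF2c.mul hφkc).neg.intervalIntegrable _ _)
        (((hWc.mul hfc).mul hφkc).intervalIntegrable _ _)]
      apply intervalIntegral.integral_congr
      intro x hx
      rw [uIcc_of_le (by norm_num : (0:ℝ) ≤ 1)] at hx
      have h0 := heq x hx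
      simp only [hfdef, hF2def, hgdef]
      linear_combination (-(μ x * φ k x)) * h0
    -- second integration by parts
    have e6 : lam k * (∫ x in (0:ℝ)..1, g x * φ k x)
        = -(∫ x in (0:ℝ)..1, g x * deriv (deriv (φ k)) x)
          + ∫ x in (0:ℝ)..1, W x * g x * φ k x := by
      rw [← intervalIntegral.integral_const_mul, ← intervalIntegral.integral_neg,
        ← intervalIntegral.integral_add (f := fun x => -(g x * deriv (deriv (φ k)) x))
          (g := fun x => W x * g x * φ k x) ((hgc.mul hψk2c).neg.intervalIntegrable _ _)
          (((hWc.mul hgc).mul hφkc).intervalIntegrable _ _)]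
      apply intervalIntegral.integral_congr
      intro x hx
      rw [uIcc_of_le (by norm_num : (0:ℝ) ≤ 1)] at hx
      have h0 := hode k hk x hx
      linear_combination (-(g x)) * h0
    have e7 : (∫ x in (0:ℝ)..1, (G x * φ k x - g x * deriv (deriv (φ k)) x))
        = -(g 1 * deriv (φ k) 1) + g 0 * deriv (φ k) 0 := by
      rw [wronskian_ftc g g1 G (φ k) (deriv (φ k)) (deriv (deriv (φ k)))
        hgc.continuousOn hg1c.continuousOn hφkc.continuousOn hψkc.continuousOn
        (fun x _ => Hg x) Hg1 (fun x _ => (hφkd x).hasDerivAt)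
        (fun x _ => (hφk1d x).hasDerivAt)
        (((hGc.mul hφkc).sub (hgc.mul hψk2c)).intervalIntegrable _ _)]
      rw [hbck0, hbck1]; ring
    have e8 : (∫ x in (0:ℝ)..1, g x * deriv (deriv (φ k)) x)
        = (∫ x in (0:ℝ)..1, G x * φ k x) - (-(g 1 * deriv (φ k) 1) + g 0 * deriv (φ k) 0) := by
      rw [intervalIntegral.integral_sub (f := fun x => G x * φ k x)
        (g := fun x => g x * deriv (deriv (φ k)) x) ((hGc.mul hφkc).intervalIntegrable _ _)
        ((hgc.mul hψk2c).intervalIntegrable _ _)] at e7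
      linarith
    have e9 : lam k * (∫ x in (0:ℝ)..1, g x * φ k x)
        = (∫ x in (0:ℝ)..1, h x * φ k x)
          + (-(g 1 * deriv (φ k) 1) + g 0 * deriv (φ k) 0) := by
      rw [e6, e8]
      have : (∫ x in (0:ℝ)..1, h x * φ k x)
          = -(∫ x in (0:ℝ)..1, G x * φ k x) + ∫ x in (0:ℝ)..1, W x * g x * φ k x := by
        rw [← intervalIntegral.integral_neg, ← intervalIntegral.integral_add
          (f := fun x => -(G x * φ k x)) (g := fun x => W x * g x * φ k x)
          ((hGc.mul hφkc).neg.intervalIntegrable _ _)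
          (((hWc.mul hgc).mul hφkc).intervalIntegrable _ _)]
        apply intervalIntegral.integral_congr
        intro x _
        simp only [hhdef]
        ring
      rw [this]; ring
    have hg0 : g 0 = -(2 * (μ1 0 * ψ 0)) := by simp [hgdef, hbcj0]
    have hg1v : g 1 = -(2 * (μ1 1 * ψ 1)) := by simp [hgdef, hbcj1]
    have : (lam k)^2 * (∫ x in (0:ℝ)..1, μ x * φ j x * φ k x)
        = lam k * (lam k * (∫ x in (0:ℝ)..1, μ x * φ j x * φ k x)) := by ring
    rw [this, e5, e9, hg0, hg1v]
    ring
  -- sup bound for h on [0,1]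
  obtain ⟨Mh, hMh⟩ : ∃ M, ∀ x ∈ Icc (0:ℝ) 1, ‖h x‖ ≤ M :=
    isCompact_Icc.exists_bound_of_continuousOn hhc.continuousOn
  have hMh0 : 0 ≤ Mh := le_trans (norm_nonneg _) (hMh 0 (by norm_num))
  have hπ : (0:ℝ) < Real.pi := Real.pi_pos
  have hπ3 : (3:ℝ) < Real.pi := Real.pi_gt_three
  have hs2 : (0:ℝ) ≤ Real.sqrt 2 := Real.sqrt_nonneg 2
  -- constants
  set B2 : ℝ := Mh*(Real.sqrt 2 + C0) + 2* |μ1 1 * ψ 1| *C0 + 2* |μ1 0 * ψ 0| *C0 with hB2def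
  set B3 : ℝ := |μ1 1 * ψ 1| + |μ1 0 * ψ 0| with hB3def
  set A : ℝ := 6*Real.sqrt 2*B3*(|c|+C0)*Real.pi^2 + Real.pi^3*B2 with hAdef
  have hB2 : 0 ≤ B2 := by positivity
  have hB3 : 0 ≤ B3 := by positivity
  have hA : 0 ≤ A := by positivity
  refine ⟨4*A/Real.pi^7 + 1, by positivity, Nat.ceil (|c| + C0) + 1, ?_⟩
  intro k hK
  have hk1 : 1 ≤ k := le_trans (Nat.succ_le_succ (Nat.zero_le _)) hK
  have hkR : (1:ℝ) ≤ (k:ℝ) := by exact_mod_cast hk1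
  have hkpos : (0:ℝ) < (k:ℝ) := lt_of_lt_of_le one_pos hkR
  have hck : |c| + C0 ≤ (k:ℝ) := by
    have h1 : (Nat.ceil (|c| + C0) : ℝ) ≤ (k:ℝ) := by
      exact_mod_cast le_trans (Nat.le_succ _) hK
    exact le_trans (Nat.le_ceil _) h1
  -- boundary derivative estimates
  have hd1 := hsup' k hk1 1 ⟨by norm_num, le_refl 1⟩
  have hd0 := hsup' k hk1 0 ⟨le_refl 0, by norm_num⟩
  have hcos1 : Real.cos ((k:ℝ) * Real.pi * 1) = (-1:ℝ)^k := by
    rw [mul_one]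
    simpa using Real.cos_nat_mul_pi_sub 0 k
  have hcos0 : Real.cos ((k:ℝ) * Real.pi * 0) = 1 := by
    rw [mul_zero, Real.cos_zero]
  rw [hcos1] at hd1
  rw [hcos0, mul_one] at hd0
  -- the integral term estimate
  have hIb : |∫ x in (0:ℝ)..1, h x * φ k x| ≤ Mh*(Real.sqrt 2 + C0) := by
    have := intervalIntegral.norm_integral_le_of_norm_le_const
      (C := Mh*(Real.sqrt 2 + C0)) (f := fun x => h x * φ k x) (a := 0) (b := 1) ?_
    · simpa using this
    · intro x hx
      rw [uIoc_of_le (by norm_num : (0:ℝ) ≤ 1)] at hx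
      have hx' : x ∈ Icc (0:ℝ) 1 := ⟨le_of_lt hx.1, hx.2⟩
      have hφb : |φ k x| ≤ Real.sqrt 2 + C0 := by
        have h1 := hsup k hk1 x hx'
        have h2 : |Real.sqrt 2 * Real.sin ((k:ℝ) * Real.pi * x)| ≤ Real.sqrt 2 := by
          rw [abs_mul, abs_of_nonneg hs2]
          exact mul_le_of_le_one_right hs2 (Real.abs_sin_le_one _)
        have h3 : C0 / k ≤ C0 := div_le_self hC0.le hkR
        calc |φ k x| = |(φ k x - Real.sqrt 2 * Real.sin ((k:ℝ) * Real.pi * x))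
              + Real.sqrt 2 * Real.sin ((k:ℝ) * Real.pi * x)| := by rw [sub_add_cancel]
          _ ≤ |φ k x - Real.sqrt 2 * Real.sin ((k:ℝ) * Real.pi * x)|
              + |Real.sqrt 2 * Real.sin ((k:ℝ) * Real.pi * x)| := abs_add_le _ _
          _ ≤ C0 / k + Real.sqrt 2 := add_le_add h1 h2
          _ ≤ Real.sqrt 2 + C0 := by linarith only [h3]
      calc ‖h x * φ k x‖ = |h x| * |φ k x| := abs_mul _ _
        _ ≤ Mh * (Real.sqrt 2 + C0) :=
          mul_le_mul (hMh x hx') hφb (abs_nonneg _) hMh0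
  -- the key identity specialisation
  have hkeyk := hkey k hk1
  set L := lam k with hLdef
  set I := ∫ x in (0:ℝ)..1, μ x * φ j x * φ k x with hIdef
  set D : ℝ := (-1:ℝ)^k * μ1 1 * ψ 1 - μ1 0 * ψ 0 with hDdef
  set E : ℝ := L^2 * I - 2*Real.sqrt 2*(k:ℝ)*Real.pi*D with hEdef
  have hE : L^2 * I = 2*Real.sqrt 2*(k:ℝ)*Real.pi*D + E := by rw [hEdef]; ring
  have hEeq : E = (∫ x in (0:ℝ)..1, h x * φ k x)
      + 2*(μ1 1 * ψ 1)*(deriv (φ k) 1 - Real.sqrt 2*(k:ℝ)*Real.pi*(-1:ℝ)^k)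
      + (-2)*(μ1 0 * ψ 0)*(deriv (φ k) 0 - Real.sqrt 2*(k:ℝ)*Real.pi) := by
    rw [hEdef, hkeyk, hDdef]; ring
  have hEb : |E| ≤ B2 := by
    rw [hEeq]
    have t0 := abs_add_three (∫ x in (0:ℝ)..1, h x * φ k x)
      (2*(μ1 1 * ψ 1)*(deriv (φ k) 1 - Real.sqrt 2*(k:ℝ)*Real.pi*(-1:ℝ)^k))
      ((-2)*(μ1 0 * ψ 0)*(deriv (φ k) 0 - Real.sqrt 2*(k:ℝ)*Real.pi))
    have t1 : |2*(μ1 1 * ψ 1)*(deriv (φ k) 1 - Real.sqrt 2*(k:ℝ)*Real.pi*(-1:ℝ)^k)|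
        ≤ 2* |μ1 1 * ψ 1| *C0 := by
      rw [abs_mul, abs_mul, abs_two]
      have : |deriv (φ k) 1 - Real.sqrt 2*(k:ℝ)*Real.pi*(-1:ℝ)^k| ≤ C0 := hd1
      exact mul_le_mul_of_nonneg_left this (by positivity)
    have t2 : |(-2)*(μ1 0 * ψ 0)*(deriv (φ k) 0 - Real.sqrt 2*(k:ℝ)*Real.pi)|
        ≤ 2* |μ1 0 * ψ 0| *C0 := by
      rw [abs_mul, abs_mul]
      have h4 : |(-2:ℝ)| = 2 := by norm_num
      rw [h4]
      have : |deriv (φ k) 0 - Real.sqrt 2*(k:ℝ)*Real.pi| ≤ C0 := hd0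
      exact mul_le_mul_of_nonneg_left this (by positivity)
    rw [hB2def]
    exact le_trans t0 (add_le_add (add_le_add hIb t1) t2)
  -- eigenvalue bounds
  have hasymk := hasym k hk1
  have habs := abs_le.mp hasymk
  have hccc : -(|c|) ≤ c ∧ c ≤ |c| := ⟨neg_abs_le c, le_abs_self c⟩
  have hkk2 : (k:ℝ) ≤ (k:ℝ)^2 := by
    calc (k:ℝ) = (k:ℝ)*1 := by ring
      _ ≤ (k:ℝ)*(k:ℝ) := mul_le_mul_of_nonneg_left hkR (by linarith only [hkR])
      _ = (k:ℝ)^2 := by ring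
  have hπ2 : (9:ℝ) ≤ Real.pi^2 := by
    calc (9:ℝ) = 3*3 := by norm_num
      _ ≤ Real.pi*Real.pi := mul_le_mul hπ3.le hπ3.le (by norm_num) hπ.le
      _ = Real.pi^2 := by ring
  have h9k : (k:ℝ)^2*9 ≤ (k:ℝ)^2*Real.pi^2 :=
    mul_le_mul_of_nonneg_left hπ2 (sq_nonneg ((k:ℝ)))
  have hLlow : (k:ℝ)^2*Real.pi^2/2 ≤ L := by
    linarith only [habs.1, hccc.1, hck, hkk2, h9k]
  have hLhigh : L ≤ 2*(k:ℝ)^2*Real.pi^2 := by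
    linarith only [habs.2, hccc.2, hck, hkk2, h9k]
  have hLpos : 0 < L := lt_of_lt_of_le (by positivity) hLlow
  have hLsq : ((k:ℝ)^2*Real.pi^2/2)^2 ≤ L^2 := by
    have h0 : (0:ℝ) ≤ (k:ℝ)^2*Real.pi^2/2 := by positivity
    exact pow_le_pow_left₀ h0 hLlow 2
  have hden2 : Real.pi^7*(k:ℝ)^4/4 ≤ Real.pi^3*L^2 := by
    have h5 := mul_le_mul_of_nonneg_left hLsq (by positivity : (0:ℝ) ≤ Real.pi^3)
    calc Real.pi^7*(k:ℝ)^4/4 = Real.pi^3*(((k:ℝ)^2*Real.pi^2/2)^2) := by ring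
      _ ≤ Real.pi^3*L^2 := h5
  -- |D| bound
  have hDb : |D| ≤ B3 := by
    rw [hDdef, hB3def]
    calc |(-1:ℝ)^k * μ1 1 * ψ 1 - μ1 0 * ψ 0|
        ≤ |(-1:ℝ)^k * μ1 1 * ψ 1| + |μ1 0 * ψ 0| := abs_sub _ _
      _ = |μ1 1 * ψ 1| + |μ1 0 * ψ 0| := by
          rw [mul_assoc, abs_mul, abs_pow, abs_neg, abs_one, one_pow, one_mul]
  -- difference of squares bound
  have hdiffsq : |(k:ℝ)^4*Real.pi^4 - L^2| ≤ (|c|+C0)*(3*(k:ℝ)^2*Real.pi^2) := by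
    rw [show (k:ℝ)^4*Real.pi^4 - L^2
        = ((k:ℝ)^2*Real.pi^2 - L)*((k:ℝ)^2*Real.pi^2 + L) by ring, abs_mul]
    have u1 : |(k:ℝ)^2*Real.pi^2 - L| ≤ |c| + C0 := by
      rw [abs_sub_comm]
      calc |L - (k:ℝ)^2*Real.pi^2| = |(L - (k:ℝ)^2*Real.pi^2 - c) + c| := by congr 1; ring
        _ ≤ |L - (k:ℝ)^2*Real.pi^2 - c| + |c| := abs_add_le _ _
        _ ≤ C0 + |c| := add_le_add hasymk le_rfl
        _ = |c| + C0 := by ring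
    have u2 : |(k:ℝ)^2*Real.pi^2 + L| ≤ 3*(k:ℝ)^2*Real.pi^2 := by
      have hp0 : (0:ℝ) < (k:ℝ)^2*Real.pi^2 + L := by positivity
      rw [abs_of_pos hp0]
      linarith only [hLhigh]
    exact mul_le_mul u1 u2 (abs_nonneg _) (by positivity)
  -- the numerator
  set Num : ℝ := 2*Real.sqrt 2*D*((k:ℝ)^4*Real.pi^4 - L^2)
      + Real.pi^3*(k:ℝ)^3*E with hNumdef
  have hfrac : (k:ℝ)^3 * I - 2*Real.sqrt 2/Real.pi^3 * D
      = Num / (Real.pi^3*L^2) := by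
    rw [eq_div_iff (by positivity : Real.pi^3*L^2 ≠ 0), hNumdef]
    have hπne : (Real.pi:ℝ) ≠ 0 := ne_of_gt hπ
    field_simp
    linear_combination Real.pi^6*(k:ℝ)^3 * hE
  have hNumb : |Num| ≤ (k:ℝ)^3 * A := by
    have v1 : |2*Real.sqrt 2*D*((k:ℝ)^4*Real.pi^4 - L^2)|
        ≤ 2*Real.sqrt 2*B3*((|c|+C0)*(3*(k:ℝ)^2*Real.pi^2)) := by
      rw [abs_mul, abs_mul, abs_mul, abs_two, abs_of_nonneg hs2]
      exact mul_le_mul (mul_le_mul le_rfl hDb (abs_nonneg _) (by positivity))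
        hdiffsq (abs_nonneg _) (by positivity)
    have v2 : |Real.pi^3*(k:ℝ)^3*E| ≤ Real.pi^3*(k:ℝ)^3*B2 := by
      rw [abs_mul, abs_mul, abs_of_nonneg (le_of_lt (by positivity : (0:ℝ) < Real.pi^3)),
        abs_of_nonneg (by positivity : (0:ℝ) ≤ (k:ℝ)^3)]
      exact mul_le_mul_of_nonneg_left hEb (by positivity)
    have v0 := abs_add_le (2*Real.sqrt 2*D*((k:ℝ)^4*Real.pi^4 - L^2))
      (Real.pi^3*(k:ℝ)^3*E)
    have hk23 : (k:ℝ)^2 ≤ (k:ℝ)^3 := pow_le_pow_right₀ hkR (by norm_num)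
    have v3 : 2*Real.sqrt 2*B3*((|c|+C0)*(3*(k:ℝ)^2*Real.pi^2))
        ≤ (6*Real.sqrt 2*B3*(|c|+C0)*Real.pi^2) * (k:ℝ)^3 := by
      have hcoef : (0:ℝ) ≤ 6*Real.sqrt 2*B3*(|c|+C0)*Real.pi^2 := by positivity
      calc 2*Real.sqrt 2*B3*((|c|+C0)*(3*(k:ℝ)^2*Real.pi^2))
          = (6*Real.sqrt 2*B3*(|c|+C0)*Real.pi^2) * (k:ℝ)^2 := by ring
        _ ≤ (6*Real.sqrt 2*B3*(|c|+C0)*Real.pi^2) * (k:ℝ)^3 :=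
            mul_le_mul_of_nonneg_left hk23 hcoef
    rw [hNumdef, hAdef]
    calc |2*Real.sqrt 2*D*((k:ℝ)^4*Real.pi^4 - L^2) + Real.pi^3*(k:ℝ)^3*E|
        ≤ |2*Real.sqrt 2*D*((k:ℝ)^4*Real.pi^4 - L^2)| + |Real.pi^3*(k:ℝ)^3*E| := v0
      _ ≤ 2*Real.sqrt 2*B3*((|c|+C0)*(3*(k:ℝ)^2*Real.pi^2)) + Real.pi^3*(k:ℝ)^3*B2 :=
          add_le_add v1 v2
      _ ≤ (6*Real.sqrt 2*B3*(|c|+C0)*Real.pi^2) * (k:ℝ)^3 + Real.pi^3*(k:ℝ)^3*B2 :=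
          add_le_add v3 le_rfl
      _ = (k:ℝ)^3 * (6*Real.sqrt 2*B3*(|c|+C0)*Real.pi^2 + Real.pi^3*B2) := by ring
  -- final chain
  rw [hfrac, abs_div, abs_of_pos (by positivity : (0:ℝ) < Real.pi^3*L^2)]
  have hk3A : (0:ℝ) ≤ (k:ℝ)^3*A := by positivity
  calc |Num| / (Real.pi^3*L^2) ≤ ((k:ℝ)^3*A) / (Real.pi^3*L^2) :=
        (div_le_div_iff_of_pos_right (by positivity)).mpr hNumb
    _ ≤ ((k:ℝ)^3*A) / (Real.pi^7*(k:ℝ)^4/4) :=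
        div_le_div_of_nonneg_left hk3A (by positivity) hden2
    _ = (4*A/Real.pi^7) / (k:ℝ) := by
        field_simp
    _ ≤ (4*A/Real.pi^7 + 1) / (k:ℝ) :=
        (div_le_div_iff_of_pos_right hkpos).mpr (le_add_of_nonneg_right zero_le_one)
end

section
/- Let W : [0,1] → ℝ be continuously differentiable, μ : [0,1] → ℝ four times continuously differentiable, c ∈ ℝ, C₀ > 0, and let j ≥ 1 be an integer. Let (λ_k)_{k≥1} be a strictly increasing sequence of real numbers with |λ_k − k²π² − c| ≤ C₀ for all k, and let (φ_k)_{k≥1} be twice continuously differentiable real-valued functions on [0,1] such that for every k: φ_k(0) = φ_k(1) = 0, −φ_k'' + W·φ_k = λ_k·φ_k on [0,1], sup_{x∈[0,1]} |φ_k(x) − √2·sin(kπx)| ≤ C₀/k, and sup_{x∈[0,1]} |φ_k'(x) − √2·kπ·cos(kπx)| ≤ C₀. Assume moreover that μ'(1)·φ_j'(1) − μ'(0)·φ_j'(0) ≠ 0 and μ'(1)·φ_j'(1) + μ'(0)·φ_j'(0) ≠ 0. Then there exist C_j > 0 and K_j ∈ ℕ such that | ∫₀¹ μ(x)φ_j(x)φ_k(x)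 dx | ≥ C_j / k³ for all k ≥ K_j. -/
open intervalIntegral

set_option maxHeartbeats 1000000

private lemma derivStep {f : ℝ → ℝ} {n : ℕ} (h : ContDiff ℝ (n + 1) f) :
    ContDiff ℝ n (deriv f) := by
  have h' : ContDiff ℝ ((n : WithTop ℕ∞) + 1) f := by exact_mod_cast h
  exact (contDiff_succ_iff_deriv.mp h').2.2

private lemma lamAbs {L p2 c C0 x : ℝ} (h : |L - x ^ 2 * p2 - c| ≤ C0) (hx : 1 ≤ x)
    (hp2 : 0 ≤ p2) (hC0 : 0 ≤ C0) : |L| ≤ (p2 + |c| + C0) * x ^ 2 := by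
  rw [abs_le] at h ⊢
  have hx2 : 1 ≤ x ^ 2 := by nlinarith
  constructor
  · nlinarith [le_abs_self c, neg_abs_le c, abs_nonneg c]
  · nlinarith [le_abs_self c, neg_abs_le c, abs_nonneg c]

/-- under the classical Dirichlet eigenvalue/eigenfunction asymptotics and the
boundary conditions `μ'(1)φ_j'(1) ± μ'(0)φ_j'(0) ≠ 0`, the matrix elements satisfy the lower
bound `|∫₀¹ μ φ_j φ_k| ≥ C_j / k³` for all large `k`. -/
theorem stmt_14 (W μ : ℝ → ℝ) (c C0 : ℝ) (hC0 : 0 < C0) (j : ℕ) (hj : 1 ≤ j)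
    (hW : ContDiff ℝ 1 W) (hμ : ContDiff ℝ 4 μ)
    (lam : ℕ → ℝ) (φ : ℕ → ℝ → ℝ)
    (hmono : ∀ k l : ℕ, 1 ≤ k → k < l → lam k < lam l)
    (hasym : ∀ k : ℕ, 1 ≤ k → |lam k - (k : ℝ) ^ 2 * Real.pi ^ 2 - c| ≤ C0)
    (hreg : ∀ k : ℕ, 1 ≤ k → ContDiff ℝ 2 (φ k))
    (hbc : ∀ k : ℕ, 1 ≤ k → φ k 0 = 0 ∧ φ k 1 = 0)
    (hode : ∀ k : ℕ, 1 ≤ k → ∀ x ∈ Set.Icc (0 : ℝ) 1,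
      -(deriv (deriv (φ k))) x + W x * φ k x = lam k * φ k x)
    (hsup : ∀ k : ℕ, 1 ≤ k → ∀ x ∈ Set.Icc (0 : ℝ) 1,
      |φ k x - Real.sqrt 2 * Real.sin ((k : ℝ) * Real.pi * x)| ≤ C0 / k)
    (hsup' : ∀ k : ℕ, 1 ≤ k → ∀ x ∈ Set.Icc (0 : ℝ) 1,
      |deriv (φ k) x - Real.sqrt 2 * (k : ℝ) * Real.pi * Real.cos ((k : ℝ) * Real.pi * x)|
        ≤ C0)
    (hbd1 : deriv μ 1 * deriv (φ j) 1 - deriv μ 0 * deriv (φ j) 0 ≠ 0)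
    (hbd2 : deriv μ 1 * deriv (φ j) 1 + deriv μ 0 * deriv (φ j) 0 ≠ 0) :
    ∃ Cj : ℝ, 0 < Cj ∧ ∃ Kj : ℕ, ∀ k : ℕ, Kj ≤ k →
      Cj / (k : ℝ) ^ 3 ≤ |∫ x in (0 : ℝ)..1, μ x * φ j x * φ k x| := by
  -- ### regularity bookkeeping
  have hμ4 : ContDiff ℝ ((3:ℕ) + 1) μ := by exact_mod_cast hμ
  have hμ3 : ContDiff ℝ ((2:ℕ) + 1) (deriv μ) := by exact_mod_cast derivStep hμ4
  have hμ2 : ContDiff ℝ ((1:ℕ) + 1) (deriv (deriv μ)) := by exact_mod_cast derivStep hμ3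
  have hμ1 : ContDiff ℝ (1:ℕ) (deriv (deriv (deriv μ))) := by exact_mod_cast derivStep hμ2
  have hφj2 : ContDiff ℝ ((1:ℕ) + 1) (φ j) := by exact_mod_cast hreg j hj
  have hφj1 : ContDiff ℝ (1:ℕ) (deriv (φ j)) := by exact_mod_cast derivStep hφj2
  have dμ : Differentiable ℝ μ := hμ4.differentiable (by exact_mod_cast not_false)
  have dμ1 : Differentiable ℝ (deriv μ) :=
    hμ3.differentiable (by exact_mod_cast not_false)
  have dμ2 : Differentiable ℝ (deriv (deriv μ)) :=
    hμ2.differentiable (by exact_mod_cast not_false)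
  have dμ3 : Differentiable ℝ (deriv (deriv (deriv μ))) :=
    hμ1.differentiable (by exact_mod_cast not_false)
  have dφj : Differentiable ℝ (φ j) :=
    hφj2.differentiable (by exact_mod_cast not_false)
  have dφj1 : Differentiable ℝ (deriv (φ j)) :=
    hφj1.differentiable (by exact_mod_cast not_false)
  have dW : Differentiable ℝ W := hW.differentiable one_ne_zero
  have hdμ : ∀ x, HasDerivAt μ (deriv μ x) x := fun x => (dμ x).hasDerivAt
  have hdμ1 : ∀ x, HasDerivAt (deriv μ) (deriv (deriv μ) x) x := fun x => (dμ1 x).hasDerivAt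
  have hdμ2 : ∀ x, HasDerivAt (deriv (deriv μ)) (deriv (deriv (deriv μ)) x) x :=
    fun x => (dμ2 x).hasDerivAt
  have hdφj : ∀ x, HasDerivAt (φ j) (deriv (φ j) x) x := fun x => (dφj x).hasDerivAt
  have hdφj1 : ∀ x, HasDerivAt (deriv (φ j)) (deriv (deriv (φ j)) x) x :=
    fun x => (dφj1 x).hasDerivAt
  have cμ : Continuous μ := dμ.continuous
  have cμ1 : Continuous (deriv μ) := dμ1.continuous
  have cμ2 : Continuous (deriv (deriv μ)) := dμ2.continuous
  have cμ3 : Continuous (deriv (deriv (deriv μ))) := dμ3.continuous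
  have cφj : Continuous (φ j) := dφj.continuous
  have cφj1 : Continuous (deriv (φ j)) := dφj1.continuous
  have cφj2 : Continuous (deriv (deriv (φ j))) :=
    hφj1.continuous_deriv (by exact_mod_cast le_refl (1:ℕ))
  have cW : Continuous W := dW.continuous
  obtain ⟨hj0, hj1⟩ := hbc j hj
  -- ### auxiliary functions
  set F : ℝ → ℝ := fun x => μ x * φ j x with hF
  set F1 : ℝ → ℝ := fun x => deriv μ x * φ j x + μ x * deriv (φ j) x with hF1
  set F2 : ℝ → ℝ := fun x =>
    (deriv (deriv μ) x * φ j x + deriv μ x * deriv (φ j) x)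
      + (deriv μ x * deriv (φ j) x + μ x * deriv (deriv (φ j)) x) with hF2
  set g : ℝ → ℝ := fun x =>
    -(deriv (deriv μ) x * φ j x) - 2 * (deriv μ x * deriv (φ j) x)
      + lam j * (μ x * φ j x) with hg
  set G1 : ℝ → ℝ := fun x =>
    -(deriv (deriv (deriv μ)) x * φ j x + deriv (deriv μ) x * deriv (φ j) x)
      - 2 * (deriv (deriv μ) x * deriv (φ j) x + deriv μ x * deriv (deriv (φ j)) x)
      + lam j * (deriv μ x * φ j x + μ x * deriv (φ j) x) with hG1
  set p : ℝ → ℝ := fun x =>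
    -(deriv (deriv (deriv μ)) x * φ j x + deriv (deriv μ) x * deriv (φ j) x)
      - 2 * (deriv (deriv μ) x * deriv (φ j) x
              + deriv μ x * (W x * φ j x - lam j * φ j x))
      + lam j * (deriv μ x * φ j x + μ x * deriv (φ j) x) with hp
  have hFd : ∀ x, HasDerivAt F (F1 x) x := fun x => (hdμ x).mul (hdφj x)
  have hF1d : ∀ x, HasDerivAt F1 (F2 x) x :=
    fun x => ((hdμ1 x).mul (hdφj x)).add ((hdμ x).mul (hdφj1 x))
  have hgd : ∀ x, HasDerivAt g (G1 x) x := by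
    intro x
    have h1 : HasDerivAt (fun x => -(deriv (deriv μ) x * φ j x))
        (-(deriv (deriv (deriv μ)) x * φ j x + deriv (deriv μ) x * deriv (φ j) x)) x :=
      ((hdμ2 x).mul (hdφj x)).neg
    have h2 : HasDerivAt (fun x => 2 * (deriv μ x * deriv (φ j) x))
        (2 * (deriv (deriv μ) x * deriv (φ j) x + deriv μ x * deriv (deriv (φ j)) x)) x :=
      ((hdμ1 x).mul (hdφj1 x)).const_mul 2
    have h3 : HasDerivAt (fun x => lam j * (μ x * φ j x))
        (lam j * (deriv μ x * φ j x + μ x * deriv (φ j) x)) x :=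
      ((hdμ x).mul (hdφj x)).const_mul (lam j)
    exact (h1.sub h2).add h3
  have cF : Continuous F := by rw [hF]; fun_prop
  have cF1 : Continuous F1 := by rw [hF1]; fun_prop
  have cF2 : Continuous F2 := by rw [hF2]; fun_prop
  have cg : Continuous g := by rw [hg]; fun_prop
  have cG1 : Continuous G1 := by rw [hG1]; fun_prop
  have dp : Differentiable ℝ p := by rw [hp]; fun_prop
  have cp : Continuous p := dp.continuous
  have hpd : ∀ x, HasDerivAt p (deriv p x) x := fun x => (dp x).hasDerivAt
  have hφjC1 : ContDiff ℝ (1:ℕ) (φ j) :=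
    hφj2.of_le (by exact_mod_cast (by norm_num : (1:ℕ) ≤ 2))
  have hpC1 : ContDiff ℝ (1:ℕ) p := by
    rw [hp]
    exact ((((hμ1.mul hφjC1).add
        ((hμ2.of_le (by exact_mod_cast (by norm_num : (1:ℕ) ≤ 2))).mul hφj1)).neg).sub
      (contDiff_const.mul
        (((hμ2.of_le (by exact_mod_cast (by norm_num : (1:ℕ) ≤ 2))).mul hφj1).add
          ((hμ3.of_le (by exact_mod_cast (by norm_num : (1:ℕ) ≤ 3))).mul
            (((by exact_mod_cast hW : ContDiff ℝ (1:ℕ) W).mul hφjC1).sub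
              (contDiff_const.mul hφjC1)))))).add
      (contDiff_const.mul
        (((hμ3.of_le (by exact_mod_cast (by norm_num : (1:ℕ) ≤ 3))).mul hφjC1).add
          ((hμ4.of_le (by exact_mod_cast (by norm_num : (1:ℕ) ≤ 4))).mul hφj1)))
  have cdp : Continuous (deriv p) := hpC1.continuous_deriv (by exact_mod_cast le_refl (1:ℕ))
  -- the boundary values of g
  have gv1 : g 1 = -(2 * (deriv μ 1 * deriv (φ j) 1)) := by
    simp only [hg]; rw [hj1]; ring
  have gv0 : g 0 = -(2 * (deriv μ 0 * deriv (φ j) 0)) := by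
    simp only [hg]; rw [hj0]; ring
  -- ### constants
  set a := deriv μ 1 * deriv (φ j) 1 with ha
  set b := deriv μ 0 * deriv (φ j) 0 with hb
  set m := min |a - b| |a + b| with hm'
  have hm : 0 < m := lt_min (abs_pos.mpr hbd1) (abs_pos.mpr hbd2)
  obtain ⟨M, hM⟩ := (isCompact_Icc : IsCompact (Set.Icc (0:ℝ) 1)).exists_bound_of_continuousOn
    (((cW.mul cg).sub cdp).continuousOn)
  have hM0 : 0 ≤ M := le_trans (norm_nonneg _) (hM 0 (by norm_num))
  have hs2 : (0:ℝ) < Real.sqrt 2 := by positivity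
  have hπ : (0:ℝ) < Real.pi := Real.pi_pos
  set E := 2 * |a| * C0 + 2 * |b| * C0 + M * (Real.sqrt 2 + C0) with hE
  have hE0 : 0 ≤ E := by positivity
  set A := Real.pi^2 + |c| + C0 with hA
  have hA0 : 0 < A := by positivity
  have hnum : 0 < Real.sqrt 2 * Real.pi * m := mul_pos (mul_pos hs2 hπ) hm
  obtain ⟨N, hN⟩ := exists_nat_gt (E / (Real.sqrt 2 * Real.pi * m))
  refine ⟨Real.sqrt 2 * Real.pi * m / A^2, div_pos hnum (by positivity), max N 1, ?_⟩
  intro k hk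
  -- ### per-k regularity
  have hk1 : 1 ≤ k := le_trans (le_max_right N 1) hk
  have hkR : (1:ℝ) ≤ (k:ℝ) := by exact_mod_cast hk1
  have hk0 : (0:ℝ) < (k:ℝ) := lt_of_lt_of_le one_pos hkR
  obtain ⟨hb0, hb1⟩ := hbc k hk1
  have hφk2 : ContDiff ℝ ((1:ℕ) + 1) (φ k) := by exact_mod_cast hreg k hk1
  have hφk1 : ContDiff ℝ (1:ℕ) (deriv (φ k)) := by exact_mod_cast derivStep hφk2
  have dφk : Differentiable ℝ (φ k) :=
    hφk2.differentiable (by exact_mod_cast not_false)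
  have dφk1 : Differentiable ℝ (deriv (φ k)) :=
    hφk1.differentiable (by exact_mod_cast not_false)
  have hdφk : ∀ x, HasDerivAt (φ k) (deriv (φ k) x) x := fun x => (dφk x).hasDerivAt
  have hdφk1 : ∀ x, HasDerivAt (deriv (φ k)) (deriv (deriv (φ k)) x) x :=
    fun x => (dφk1 x).hasDerivAt
  have cφk : Continuous (φ k) := dφk.continuous
  have cφk1 : Continuous (deriv (φ k)) := dφk1.continuous
  have cφk2 : Continuous (deriv (deriv (φ k))) :=
    hφk1.continuous_deriv (by exact_mod_cast le_refl (1:ℕ))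
  -- ### the two integrations by parts
  have ib1 : ∫ x in (0:ℝ)..1, F x * deriv (deriv (φ k)) x
      = F 1 * deriv (φ k) 1 - F 0 * deriv (φ k) 0
        - ∫ x in (0:ℝ)..1, F1 x * deriv (φ k) x :=
    integral_mul_deriv_eq_deriv_mul (fun x _ => hFd x) (fun x _ => hdφk1 x)
      (cF1.intervalIntegrable 0 1) (cφk2.intervalIntegrable 0 1)
  have ib2 : ∫ x in (0:ℝ)..1, F1 x * deriv (φ k) x
      = F1 1 * φ k 1 - F1 0 * φ k 0 - ∫ x in (0:ℝ)..1, F2 x * φ k x :=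
    integral_mul_deriv_eq_deriv_mul (fun x _ => hF1d x) (fun x _ => hdφk x)
      (cF2.intervalIntegrable 0 1) (cφk1.intervalIntegrable 0 1)
  have eFψ : ∫ x in (0:ℝ)..1, F x * deriv (deriv (φ k)) x
      = ∫ x in (0:ℝ)..1, F2 x * φ k x := by
    rw [ib1, ib2]
    simp only [hF, hj0, hj1, hb0, hb1, mul_zero, zero_mul, sub_zero, zero_sub, neg_neg]
  have key1 : lam k * (∫ x in (0:ℝ)..1, μ x * φ j x * φ k x)
      = ∫ x in (0:ℝ)..1, g x * φ k x := by
    rw [← intervalIntegral.integral_const_mul]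
    have c1 : Set.EqOn (fun x => lam k * (μ x * φ j x * φ k x))
        (fun x => -(F x * deriv (deriv (φ k)) x) + (W x * F x) * φ k x)
        (Set.uIcc (0:ℝ) 1) := by
      intro x hx
      rw [Set.uIcc_of_le (by norm_num : (0:ℝ) ≤ 1)] at hx
      have h := hode k hk1 x hx
      simp only [hF]
      linear_combination (-(μ x * φ j x)) * h
    rw [intervalIntegral.integral_congr c1]
    rw [intervalIntegral.integral_add (f := fun x => -(F x * deriv (deriv (φ k)) x))
        (g := fun x => W x * F x * φ k x) (((cF.mul cφk2).neg).intervalIntegrable 0 1)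
        (((cW.mul cF).mul cφk).intervalIntegrable 0 1)]
    rw [intervalIntegral.integral_neg, eFψ]
    have c2 : Set.EqOn (fun x => g x * φ k x)
        (fun x => (W x * F x) * φ k x - F2 x * φ k x) (Set.uIcc (0:ℝ) 1) := by
      intro x hx
      rw [Set.uIcc_of_le (by norm_num : (0:ℝ) ≤ 1)] at hx
      have h := hode j hj x hx
      simp only [hg, hF, hF2]
      linear_combination (-(μ x * φ k x)) * h
    rw [intervalIntegral.integral_congr c2]
    rw [intervalIntegral.integral_sub (f := fun x => W x * F x * φ k x)
        (g := fun x => F2 x * φ k x) (((cW.mul cF).mul cφk).intervalIntegrable 0 1)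
        ((cF2.mul cφk).intervalIntegrable 0 1)]
    ring
  have ib3 : ∫ x in (0:ℝ)..1, g x * deriv (deriv (φ k)) x
      = g 1 * deriv (φ k) 1 - g 0 * deriv (φ k) 0
        - ∫ x in (0:ℝ)..1, G1 x * deriv (φ k) x :=
    integral_mul_deriv_eq_deriv_mul (fun x _ => hgd x) (fun x _ => hdφk1 x)
      (cG1.intervalIntegrable 0 1) (cφk2.intervalIntegrable 0 1)
  have icong : ∫ x in (0:ℝ)..1, G1 x * deriv (φ k) x
      = ∫ x in (0:ℝ)..1, p x * deriv (φ k) x := by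
    apply intervalIntegral.integral_congr
    intro x hx
    rw [Set.uIcc_of_le (by norm_num : (0:ℝ) ≤ 1)] at hx
    have h := hode j hj x hx
    have hd2 : deriv (deriv (φ j)) x = W x * φ j x - lam j * φ j x := by linarith
    simp only [hG1, hp, hd2]
  have ib4 : ∫ x in (0:ℝ)..1, p x * deriv (φ k) x
      = p 1 * φ k 1 - p 0 * φ k 0 - ∫ x in (0:ℝ)..1, deriv p x * φ k x :=
    integral_mul_deriv_eq_deriv_mul (fun x _ => hpd x) (fun x _ => hdφk x)
      (cdp.intervalIntegrable 0 1) (cφk1.intervalIntegrable 0 1)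
  have key2 : lam k * (∫ x in (0:ℝ)..1, g x * φ k x)
      = -(g 1 * deriv (φ k) 1) + g 0 * deriv (φ k) 0
        + ∫ x in (0:ℝ)..1, (W x * g x - deriv p x) * φ k x := by
    rw [← intervalIntegral.integral_const_mul]
    have c1 : Set.EqOn (fun x => lam k * (g x * φ k x))
        (fun x => -(g x * deriv (deriv (φ k)) x) + (W x * g x) * φ k x)
        (Set.uIcc (0:ℝ) 1) := by
      intro x hx
      rw [Set.uIcc_of_le (by norm_num : (0:ℝ) ≤ 1)] at hx
      have h := hode k hk1 x hx
      linear_combination (-(g x)) * h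
    rw [intervalIntegral.integral_congr c1]
    rw [intervalIntegral.integral_add (f := fun x => -(g x * deriv (deriv (φ k)) x))
        (g := fun x => W x * g x * φ k x) (((cg.mul cφk2).neg).intervalIntegrable 0 1)
        (((cW.mul cg).mul cφk).intervalIntegrable 0 1)]
    rw [intervalIntegral.integral_neg, ib3, icong, ib4]
    have c2 : Set.EqOn (fun x => (W x * g x - deriv p x) * φ k x)
        (fun x => (W x * g x) * φ k x - deriv p x * φ k x) (Set.uIcc (0:ℝ) 1) :=
      fun x _ => by ring
    rw [intervalIntegral.integral_congr c2]
    rw [intervalIntegral.integral_sub (f := fun x => W x * g x * φ k x)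
        (g := fun x => deriv p x * φ k x) (((cW.mul cg).mul cφk).intervalIntegrable 0 1)
        ((cdp.mul cφk).intervalIntegrable 0 1)]
    rw [hb0, hb1]
    ring
  have main : (lam k)^2 * (∫ x in (0:ℝ)..1, μ x * φ j x * φ k x)
      = 2 * a * deriv (φ k) 1 - 2 * b * deriv (φ k) 0
        + ∫ x in (0:ℝ)..1, (W x * g x - deriv p x) * φ k x := by
    have h1 : (lam k)^2 * (∫ x in (0:ℝ)..1, μ x * φ j x * φ k x)
        = lam k * (lam k * (∫ x in (0:ℝ)..1, μ x * φ j x * φ k x)) := by ring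
    rw [h1, key1, key2, gv1, gv0]
    ring
  -- ### estimates
  have hcos : Real.cos ((k:ℝ) * Real.pi) = 1 ∨ Real.cos ((k:ℝ) * Real.pi) = -1 := by
    have hs : Real.sin ((k:ℝ) * Real.pi) = 0 := Real.sin_nat_mul_pi k
    have h2 : Real.cos ((k:ℝ) * Real.pi) * Real.cos ((k:ℝ) * Real.pi) = 1 := by
      rw [← Real.sin_sq_add_cos_sq ((k:ℝ) * Real.pi), hs]; ring
    exact mul_self_eq_one_iff.mp h2
  have he1 : |deriv (φ k) 1 - Real.sqrt 2 * (k:ℝ) * Real.pi * Real.cos ((k:ℝ) * Real.pi)|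
      ≤ C0 := by
    have h := hsup' k hk1 1 (by norm_num)
    simpa using h
  have he0 : |deriv (φ k) 0 - Real.sqrt 2 * (k:ℝ) * Real.pi| ≤ C0 := by
    have h := hsup' k hk1 0 (by norm_num)
    simpa using h
  have hRb : |∫ x in (0:ℝ)..1, (W x * g x - deriv p x) * φ k x|
      ≤ M * (Real.sqrt 2 + C0) := by
    have hbnd : ∀ x ∈ Set.uIoc (0:ℝ) 1,
        ‖(W x * g x - deriv p x) * φ k x‖ ≤ M * (Real.sqrt 2 + C0) := by
      intro x hx
      have hxI : x ∈ Set.Icc (0:ℝ) 1 := by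
        rw [Set.uIoc_of_le (by norm_num : (0:ℝ) ≤ 1)] at hx
        exact ⟨le_of_lt hx.1, hx.2⟩
      have h1 : |W x * g x - deriv p x| ≤ M := by
        have := hM x hxI
        simpa [Real.norm_eq_abs] using this
      have h2 : |φ k x| ≤ Real.sqrt 2 + C0 := by
        have h3 := hsup k hk1 x hxI
        have h4 : C0 / (k:ℝ) ≤ C0 := div_le_self hC0.le hkR
        have h5 : |Real.sqrt 2 * Real.sin ((k:ℝ) * Real.pi * x)| ≤ Real.sqrt 2 := by
          rw [abs_mul, abs_of_nonneg hs2.le]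
          nlinarith [Real.abs_sin_le_one ((k:ℝ) * Real.pi * x),
            abs_nonneg (Real.sin ((k:ℝ) * Real.pi * x))]
        calc |φ k x| = |(φ k x - Real.sqrt 2 * Real.sin ((k:ℝ) * Real.pi * x))
              + Real.sqrt 2 * Real.sin ((k:ℝ) * Real.pi * x)| := by ring_nf
          _ ≤ |φ k x - Real.sqrt 2 * Real.sin ((k:ℝ) * Real.pi * x)|
              + |Real.sqrt 2 * Real.sin ((k:ℝ) * Real.pi * x)| := abs_add_le _ _
          _ ≤ Real.sqrt 2 + C0 := by linarith
      rw [Real.norm_eq_abs, abs_mul]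
      exact mul_le_mul h1 h2 (abs_nonneg _) hM0
    have h := intervalIntegral.norm_integral_le_of_norm_le_const hbnd
    simpa [Real.norm_eq_abs] using h
  -- lower bound for the main term
  have hD : m ≤ |a * Real.cos ((k:ℝ) * Real.pi) - b| := by
    rcases hcos with h | h
    · rw [h, mul_one]
      exact min_le_left _ _
    · rw [h]
      have h6 : a * (-1) - b = -(a + b) := by ring
      rw [h6, abs_neg]
      exact min_le_right _ _
  have hsplit : 2 * a * deriv (φ k) 1 - 2 * b * deriv (φ k) 0
      = 2 * (Real.sqrt 2 * (k:ℝ) * Real.pi) * (a * Real.cos ((k:ℝ) * Real.pi) - b)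
        + (2 * a * (deriv (φ k) 1 - Real.sqrt 2 * (k:ℝ) * Real.pi * Real.cos ((k:ℝ) * Real.pi))
          - 2 * b * (deriv (φ k) 0 - Real.sqrt 2 * (k:ℝ) * Real.pi)) := by ring
  have hBsmall : |2 * a * (deriv (φ k) 1 - Real.sqrt 2 * (k:ℝ) * Real.pi * Real.cos ((k:ℝ) * Real.pi))
      - 2 * b * (deriv (φ k) 0 - Real.sqrt 2 * (k:ℝ) * Real.pi)
      + ∫ x in (0:ℝ)..1, (W x * g x - deriv p x) * φ k x| ≤ E := by
    have t1 : |2 * a * (deriv (φ k) 1 - Real.sqrt 2 * (k:ℝ) * Real.pi * Real.cos ((k:ℝ) * Real.pi))|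
        ≤ 2 * |a| * C0 := by
      rw [abs_mul, abs_mul, abs_two]
      exact mul_le_mul_of_nonneg_left he1 (by positivity)
    have t2 : |2 * b * (deriv (φ k) 0 - Real.sqrt 2 * (k:ℝ) * Real.pi)| ≤ 2 * |b| * C0 := by
      rw [abs_mul, abs_mul, abs_two]
      exact mul_le_mul_of_nonneg_left he0 (by positivity)
    calc |_ - _ + _| ≤ |_ - _| + |∫ x in (0:ℝ)..1, (W x * g x - deriv p x) * φ k x| :=
          abs_add_le _ _
      _ ≤ (|2 * a * (deriv (φ k) 1 - Real.sqrt 2 * (k:ℝ) * Real.pi * Real.cos ((k:ℝ) * Real.pi))|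
            + |2 * b * (deriv (φ k) 0 - Real.sqrt 2 * (k:ℝ) * Real.pi)|)
            + |∫ x in (0:ℝ)..1, (W x * g x - deriv p x) * φ k x| := by
          gcongr
          exact abs_sub _ _
      _ ≤ E := by rw [hE]; linarith
  have hmainabs : 2 * (Real.sqrt 2 * (k:ℝ) * Real.pi) * m - E
      ≤ |(lam k)^2 * (∫ x in (0:ℝ)..1, μ x * φ j x * φ k x)| := by
    have h7 : |2 * (Real.sqrt 2 * (k:ℝ) * Real.pi) * (a * Real.cos ((k:ℝ) * Real.pi) - b)|
        = 2 * (Real.sqrt 2 * (k:ℝ) * Real.pi) * |a * Real.cos ((k:ℝ) * Real.pi) - b| := by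
      rw [abs_mul, abs_of_nonneg (by positivity : (0:ℝ) ≤ 2 * (Real.sqrt 2 * (k:ℝ) * Real.pi))]
    have h8 : 2 * (Real.sqrt 2 * (k:ℝ) * Real.pi) * m
        ≤ |2 * (Real.sqrt 2 * (k:ℝ) * Real.pi) * (a * Real.cos ((k:ℝ) * Real.pi) - b)| := by
      rw [h7]
      exact mul_le_mul_of_nonneg_left hD (by positivity)
    set X' := 2 * (Real.sqrt 2 * (k:ℝ) * Real.pi) * (a * Real.cos ((k:ℝ) * Real.pi) - b) with hX'
    set B := 2 * a * (deriv (φ k) 1 - Real.sqrt 2 * (k:ℝ) * Real.pi * Real.cos ((k:ℝ) * Real.pi))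
        - 2 * b * (deriv (φ k) 0 - Real.sqrt 2 * (k:ℝ) * Real.pi)
        + ∫ x in (0:ℝ)..1, (W x * g x - deriv p x) * φ k x with hB
    have h9 : (lam k)^2 * (∫ x in (0:ℝ)..1, μ x * φ j x * φ k x) = X' + B := by
      rw [main, hX', hB]; ring
    have h10 : |X'| - |B| ≤ |X' + B| := by
      have := abs_sub_abs_le_abs_sub X' (-B)
      simpa [sub_neg_eq_add] using this
    rw [h9]
    linarith [hBsmall, h8, h10]
  -- the eigenvalue bound
  have hlam : |lam k| ≤ A * (k:ℝ)^2 := by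
    rw [hA]
    exact lamAbs (hasym k hk1) hkR (sq_nonneg Real.pi) hC0.le
  have hlam2 : (lam k)^2 ≤ (A * (k:ℝ)^2)^2 := by
    have : (lam k)^2 = |lam k|^2 := (sq_abs _).symm
    rw [this]
    exact pow_le_pow_left₀ (abs_nonneg _) hlam 2
  -- conclusion
  have hkN : (E / (Real.sqrt 2 * Real.pi * m)) < (k:ℝ) := by
    have h11 : (N:ℝ) ≤ (k:ℝ) := by
      exact_mod_cast le_trans (le_max_left N 1) hk
    linarith
  have hkE : E < Real.sqrt 2 * Real.pi * m * (k:ℝ) := by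
    rw [div_lt_iff₀ hnum] at hkN
    linarith [hkN]
  have h12 : Real.sqrt 2 * Real.pi * m * (k:ℝ)
      ≤ |(lam k)^2 * (∫ x in (0:ℝ)..1, μ x * φ j x * φ k x)| := by
    have heq : 2 * (Real.sqrt 2 * (k:ℝ) * Real.pi) * m
        = 2 * (Real.sqrt 2 * Real.pi * m * (k:ℝ)) := by ring
    linarith [hmainabs, hkE, heq]
  have h13 : |(lam k)^2 * (∫ x in (0:ℝ)..1, μ x * φ j x * φ k x)|
      = (lam k)^2 * |∫ x in (0:ℝ)..1, μ x * φ j x * φ k x| := by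
    rw [abs_mul, abs_of_nonneg (sq_nonneg _)]
  have h14 : Real.sqrt 2 * Real.pi * m * (k:ℝ)
      ≤ (A * (k:ℝ)^2)^2 * |∫ x in (0:ℝ)..1, μ x * φ j x * φ k x| := by
    rw [h13] at h12
    have := mul_le_mul_of_nonneg_right hlam2 (abs_nonneg (∫ x in (0:ℝ)..1, μ x * φ j x * φ k x))
    linarith
  rw [div_div, div_le_iff₀ (by positivity : (0:ℝ) < A^2 * (k:ℝ)^3)]
  have h15 : Real.sqrt 2 * Real.pi * m * (k:ℝ)
      ≤ (|∫ x in (0:ℝ)..1, μ x * φ j x * φ k x| * (A^2 * (k:ℝ)^3)) * (k:ℝ) := by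
    rw [show (|∫ x in (0:ℝ)..1, μ x * φ j x * φ k x| * (A^2 * (k:ℝ)^3)) * (k:ℝ)
        = (A * (k:ℝ)^2)^2 * |∫ x in (0:ℝ)..1, μ x * φ j x * φ k x| from by ring]
    exact h14
  exact le_of_mul_le_mul_right h15 hk0
end
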